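/- arXiv:2109.14858 — 4 statements merged into one kernel-verified Lean document; each statement's English description precedes it below -/
import Mathlib

section
/- Let u₁, u₂ be two solutions of problem (P3) with u₁(0) < u₂(0). Then the set {r ∈ (0,∞) : u₁(r) > u₂(r)} is nonempty; its infimum ρ satisfies ρ ∈ (0,∞), u₁(ρ) = u₂(ρ), u₁ < u₂ on (0,ρ), and (u₁/u₂)'(r) > 0 for all r ∈ (0,ρ). Moreover, if u₁ > u₂ on (ρ,∞), then (u₁/u₂)'(r) > 0 for all r ∈ (0,∞). -/
open Real Filter Set MeasureTheory

noncomputable section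

/-- Condition (V1): `V` is `C²` on `(0,∞)`, `r^{N-1}|V(r)|^q` is integrable near `0`
for some `q > N`, and `liminf_{r→∞} V(r)/log r > 1 - N` (possibly `+∞`). -/
def CondV1 (N : ℕ) (V : ℝ → ℝ) : Prop :=
  ContDiffOn ℝ 2 V (Set.Ioi 0) ∧
  (∃ q : ℝ, (N : ℝ) < q ∧
    MeasureTheory.IntegrableOn (fun r : ℝ => r ^ (N - 1) * |V r| ^ q) (Set.Ioc 0 1)) ∧
  (∃ c : ℝ, 1 - (N : ℝ) < c ∧ ∀ᶠ r : ℝ in Filter.atTop, c ≤ V r / Real.log r)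

/-- Condition (Vab): `a` is `C²` with compact support, `b` is `C³` with compact support,
`b ≥ 0` and `b ≡ 1` in a neighborhood of `0`. -/
def CondVab (a b : ℝ → ℝ) : Prop :=
  ContDiff ℝ 2 a ∧ HasCompactSupport a ∧
  ContDiff ℝ 3 b ∧ HasCompactSupport b ∧
  (∀ r : ℝ, 0 ≤ b r) ∧ (∀ᶠ r in nhds (0 : ℝ), b r = 1)

/-- `θ ∈ Θ`: `θ ∈ (1-N, ∞)` and `liminf_{r→∞} (V(r) - θ log r) > -∞`. -/
def MemTheta (N : ℕ) (V : ℝ → ℝ) (θ : ℝ) : Prop :=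
  1 - (N : ℝ) < θ ∧ ∃ M : ℝ, ∀ᶠ r : ℝ in Filter.atTop, M ≤ V r - θ * Real.log r

/-- A solution of problem (P3): `u ∈ C([0,∞)) ∩ C²((0,∞))`, differentiable at `0` with
`u'(0) = 0`, satisfying `u'' + ((N-1)/r)u' - V_δ u + B_δ u log u² = 0` and `u > 0` on
`(0,∞)`, and `r^{-θ/2} u(r) → 0` as `r → ∞`. -/
def SolP3 (N : ℕ) (Vδ Bδ : ℝ → ℝ) (θ : ℝ) (u : ℝ → ℝ) : Prop :=
  ContinuousOn u (Set.Ici 0) ∧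
  ContDiffOn ℝ 2 u (Set.Ioi 0) ∧
  (∀ r : ℝ, 0 < r →
    deriv (deriv u) r + ((N : ℝ) - 1) / r * deriv u r
      - Vδ r * u r + Bδ r * (u r * Real.log (u r ^ 2)) = 0) ∧
  (∀ r : ℝ, 0 < r → 0 < u r) ∧
  HasDerivWithinAt u 0 (Set.Ici 0) 0 ∧
  Filter.Tendsto (fun r : ℝ => r ^ (-(θ / 2)) * u r) Filter.atTop (nhds 0)


-- ===== auxiliary lemmas =====

/-- Monotone from pointwise derivative. -/
lemma monoOn_of_hasDerivAt_nonneg {f f' : ℝ → ℝ} {s : Set ℝ} (hs : Convex ℝ s)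
    (hd : ∀ r ∈ s, HasDerivAt f (f' r) r) (h0 : ∀ r ∈ interior s, 0 ≤ f' r) :
    MonotoneOn f s := by
  refine monotoneOn_of_deriv_nonneg hs
    (fun r hr => (hd r hr).continuousAt.continuousWithinAt)
    (fun r hr => ((hd r (interior_subset hr)).differentiableAt).differentiableWithinAt)
    (fun r hr => ?_)
  rw [(hd r (interior_subset hr)).deriv]; exact h0 r hr

lemma antiOn_of_hasDerivAt_nonpos {f f' : ℝ → ℝ} {s : Set ℝ} (hs : Convex ℝ s)
    (hd : ∀ r ∈ s, HasDerivAt f (f' r) r) (h0 : ∀ r ∈ interior s, f' r ≤ 0) :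
    AntitoneOn f s := by
  refine antitoneOn_of_deriv_nonpos hs
    (fun r hr => (hd r hr).continuousAt.continuousWithinAt)
    (fun r hr => ((hd r (interior_subset hr)).differentiableAt).differentiableWithinAt)
    (fun r hr => ?_)
  rw [(hd r (interior_subset hr)).deriv]; exact h0 r hr

lemma strictMonoOn_of_hasDerivAt_pos {f f' : ℝ → ℝ} {s : Set ℝ} (hs : Convex ℝ s)
    (hd : ∀ r ∈ s, HasDerivAt f (f' r) r) (h0 : ∀ r ∈ interior s, 0 < f' r) :
    StrictMonoOn f s := by
  refine strictMonoOn_of_deriv_pos hs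
    (fun r hr => (hd r hr).continuousAt.continuousWithinAt) (fun r hr => ?_)
  rw [(hd r (interior_subset hr)).deriv]; exact h0 r hr

lemma strictAntiOn_of_hasDerivAt_neg {f f' : ℝ → ℝ} {s : Set ℝ} (hs : Convex ℝ s)
    (hd : ∀ r ∈ s, HasDerivAt f (f' r) r) (h0 : ∀ r ∈ interior s, f' r < 0) :
    StrictAntiOn f s := by
  refine strictAntiOn_of_deriv_neg hs
    (fun r hr => (hd r hr).continuousAt.continuousWithinAt) (fun r hr => ?_)
  rw [(hd r (interior_subset hr)).deriv]; exact h0 r hr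

/-- compactly supported functions vanish at infinity -/
lemma ev_zero_of_hcs {f : ℝ → ℝ} (h : HasCompactSupport f) : ∀ᶠ r : ℝ in atTop, f r = 0 := by
  obtain ⟨K, hK⟩ := h.isBounded.subset_closedBall 0
  filter_upwards [eventually_gt_atTop K] with r hr
  apply image_eq_zero_of_notMem_tsupport
  intro hmem
  have := hK hmem
  simp only [Metric.mem_closedBall, Real.dist_eq, sub_zero] at this
  have := le_abs_self r
  linarith

/-- derivative facts from C² on (0,∞) -/
lemma hasDerivAt_of_cd2 {u : ℝ → ℝ} (h : ContDiffOn ℝ 2 u (Set.Ioi 0)) {r : ℝ} (hr : 0 < r) :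
    HasDerivAt u (deriv u r) r :=
  (((h.differentiableOn (by norm_num)).differentiableAt (isOpen_Ioi.mem_nhds hr))).hasDerivAt

lemma cd1_deriv_of_cd2 {u : ℝ → ℝ} (h : ContDiffOn ℝ 2 u (Set.Ioi 0)) :
    ContDiffOn ℝ 1 (deriv u) (Set.Ioi 0) :=
  h.deriv_of_isOpen isOpen_Ioi (by norm_num)

lemma hasDerivAt_deriv_of_cd2 {u : ℝ → ℝ} (h : ContDiffOn ℝ 2 u (Set.Ioi 0)) {r : ℝ}
    (hr : 0 < r) : HasDerivAt (deriv u) (deriv (deriv u) r) r :=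
  ((((cd1_deriv_of_cd2 h).differentiableOn (by norm_num)).differentiableAt
    (isOpen_Ioi.mem_nhds hr))).hasDerivAt

lemma contOn_deriv_of_cd2 {u : ℝ → ℝ} (h : ContDiffOn ℝ 2 u (Set.Ioi 0)) :
    ContinuousOn (deriv u) (Set.Ioi 0) := (cd1_deriv_of_cd2 h).continuousOn

/-- integrate a power lower bound on the derivative -/
lemma integrate_step {f f' : ℝ → ℝ} {C R : ℝ} (m : ℕ) (hC : 0 < C) (hR : 1 ≤ R)
    (hd : ∀ r, R ≤ r → HasDerivAt f (f' r) r)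
    (hlb : ∀ r, R ≤ r → C * r ^ m ≤ f' r) :
    ∃ C', 0 < C' ∧ ∃ R', R ≤ R' ∧ ∀ r, R' ≤ r → C' * r ^ (m + 1) ≤ f r := by
  set Q : ℝ → ℝ := fun r => C / (m + 1) * r ^ (m + 1) with hQ
  have hm1 : (0:ℝ) < (m:ℝ) + 1 := by positivity
  have hQd : ∀ r : ℝ, HasDerivAt Q (C * r ^ m) r := by
    intro r
    have := (hasDerivAt_pow (m + 1) r).const_mul (C / ((m:ℝ) + 1))
    refine this.congr_deriv ?_
    push_cast
    field_simp
  have hmono : MonotoneOn (fun r => f r - Q r) (Set.Ici R) := by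
    refine monoOn_of_hasDerivAt_nonneg (convex_Ici R)
      (f' := fun r => f' r - C * r ^ m) (fun r hr => (hd r hr).sub (hQd r)) ?_
    intro r hr
    rw [interior_Ici] at hr
    have := hlb r (le_of_lt hr)
    linarith
  set E : ℝ := f R - Q R with hE
  refine ⟨C / (2 * ((m:ℝ) + 1)), by positivity, max R (2 * ((m:ℝ) + 1) * (|E| + 1) / C),
    le_max_left _ _, ?_⟩
  intro r hr
  have hrR : R ≤ r := le_trans (le_max_left _ _) hr
  have hr1 : (1:ℝ) ≤ r := le_trans hR hrR
  have hr2 : 2 * ((m:ℝ) + 1) * (|E| + 1) / C ≤ r := le_trans (le_max_right _ _) hr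
  have hmain : E ≤ f r - Q r := hmono (self_mem_Ici) hrR hrR
  have hpow : r ≤ r ^ (m + 1) := le_self_pow₀ hr1 (Nat.succ_ne_zero m)
  have h1 : C / (2 * ((m:ℝ) + 1)) * r ^ (m + 1) ≥ |E| + 1 := by
    have : C / (2 * ((m:ℝ) + 1)) * (2 * ((m:ℝ) + 1) * (|E| + 1) / C) = |E| + 1 := by
      field_simp
    calc C / (2 * ((m:ℝ) + 1)) * r ^ (m + 1)
        ≥ C / (2 * ((m:ℝ) + 1)) * r := by
          apply mul_le_mul_of_nonneg_left hpow (by positivity)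
      _ ≥ C / (2 * ((m:ℝ) + 1)) * (2 * ((m:ℝ) + 1) * (|E| + 1) / C) := by
          apply mul_le_mul_of_nonneg_left hr2 (by positivity)
      _ = |E| + 1 := this
  have habs : -E ≤ |E| := neg_le_abs E
  have hQr : Q r = C / ((m:ℝ) + 1) * r ^ (m + 1) := rfl
  have hsplit : C / ((m:ℝ) + 1) * r ^ (m + 1) =
      C / (2 * ((m:ℝ) + 1)) * r ^ (m + 1) + C / (2 * ((m:ℝ) + 1)) * r ^ (m + 1) := by
    field_simp; ring
  nlinarith [hmain, h1]

section W
variable {N : ℕ} {u₁ u₂ Vδ Bδ : ℝ → ℝ}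

/-- The Wronskian-type function. -/
noncomputable def Wr (N : ℕ) (u₁ u₂ : ℝ → ℝ) : ℝ → ℝ :=
  fun r => r ^ (N - 1) * (deriv u₁ r * u₂ r - u₁ r * deriv u₂ r)

lemma W_hasDerivAt (hN : 2 ≤ N)
    (h1 : ContDiffOn ℝ 2 u₁ (Set.Ioi 0)) (h2 : ContDiffOn ℝ 2 u₂ (Set.Ioi 0))
    (ode1 : ∀ r : ℝ, 0 < r →
      deriv (deriv u₁) r + ((N : ℝ) - 1) / r * deriv u₁ r
        - Vδ r * u₁ r + Bδ r * (u₁ r * Real.log (u₁ r ^ 2)) = 0)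
    (ode2 : ∀ r : ℝ, 0 < r →
      deriv (deriv u₂) r + ((N : ℝ) - 1) / r * deriv u₂ r
        - Vδ r * u₂ r + Bδ r * (u₂ r * Real.log (u₂ r ^ 2)) = 0)
    {r : ℝ} (hr : 0 < r) :
    HasDerivAt (Wr N u₁ u₂)
      (r ^ (N - 1) * (Bδ r * (u₁ r * u₂ r) * (Real.log (u₂ r ^ 2) - Real.log (u₁ r ^ 2)))) r := by
  have hd1 := hasDerivAt_of_cd2 h1 hr
  have hd2 := hasDerivAt_of_cd2 h2 hr
  have hD1 := hasDerivAt_deriv_of_cd2 h1 hr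
  have hD2 := hasDerivAt_deriv_of_cd2 h2 hr
  have hq : HasDerivAt (fun s => deriv u₁ s * u₂ s - u₁ s * deriv u₂ s)
      (deriv (deriv u₁) r * u₂ r - u₁ r * deriv (deriv u₂) r) r := by
    have := (hD1.mul hd2).sub (hd1.mul hD2)
    exact this.congr_deriv (by ring)
  have hW := (hasDerivAt_pow (N - 1) r).mul hq
  refine hW.congr_deriv ?_
  have hNc : ((N - 1 : ℕ) : ℝ) = (N : ℝ) - 1 := by
    have : 1 ≤ N := by omega
    push_cast [Nat.cast_sub this]; ring
  have hee : N - 1 - 1 = N - 2 := by omega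
  have hkey : r ^ (N - 1) = r ^ (N - 2) * r := by
    rw [← pow_succ]; congr 1; omega
  have e1 := ode1 r hr
  have e2 := ode2 r hr
  have hrne : r ≠ 0 := ne_of_gt hr
  have hE1 : deriv (deriv u₁) r
      = Vδ r * u₁ r - Bδ r * (u₁ r * Real.log (u₁ r ^ 2)) - ((N : ℝ) - 1) / r * deriv u₁ r := by
    linarith
  have hE2 : deriv (deriv u₂) r
      = Vδ r * u₂ r - Bδ r * (u₂ r * Real.log (u₂ r ^ 2)) - ((N : ℝ) - 1) / r * deriv u₂ r := by
    linarith
  rw [hE1, hE2, hee, hNc, hkey]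
  field_simp
  ring
end W

section NZ
variable {N : ℕ} {u₁ u₂ : ℝ → ℝ}

lemma near_zero_false (hN : 2 ≤ N)
    (h1c : ContinuousOn u₁ (Set.Ici 0)) (h2c : ContinuousOn u₂ (Set.Ici 0))
    (h1 : ContDiffOn ℝ 2 u₁ (Set.Ioi 0)) (h2 : ContDiffOn ℝ 2 u₂ (Set.Ioi 0))
    (pos2 : ∀ r : ℝ, 0 < r → 0 < u₂ r) (hu20 : 0 < u₂ 0)
    {r₁ : ℝ} (hr₁ : 0 < r₁)
    (hmono : ∀ r ∈ Set.Ioc 0 r₁, Wr N u₁ u₂ r ≤ Wr N u₁ u₂ r₁)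
    (hneg : Wr N u₁ u₂ r₁ < 0) : False := by
  set W₁ : ℝ := Wr N u₁ u₂ r₁ with hW₁def
  set m : ℝ := min r₁ 1 with hm
  have hm0 : 0 < m := lt_min hr₁ one_pos
  have hm1 : m ≤ 1 := min_le_right _ _
  have hmr₁ : m ≤ r₁ := min_le_left _ _
  have hu2pos : ∀ x ∈ Set.Ici (0:ℝ), 0 < u₂ x := by
    intro x hx
    rcases eq_or_lt_of_le (Set.mem_Ici.mp hx) with h | h
    · rwa [← h]
    · exact pos2 x h
  -- bound on u₂²
  obtain ⟨C, hC⟩ := (isCompact_Icc (a := (0:ℝ)) (b := r₁)).exists_bound_of_continuousOn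
    (h2c.mono (Set.Icc_subset_Ici_self))
  set C₂ : ℝ := C ^ 2 + 1 with hC₂def
  have hC₂pos : 0 < C₂ := by positivity
  have hC₂ : ∀ x ∈ Set.Icc (0:ℝ) r₁, u₂ x ^ 2 ≤ C₂ := by
    intro x hx
    have h := hC x hx
    have : u₂ x ^ 2 ≤ C ^ 2 := by
      rw [← sq_abs]
      exact pow_le_pow_left₀ (abs_nonneg _) h 2
    linarith
  set c : ℝ := -W₁ / C₂ with hcdef
  have hcpos : 0 < c := by
    apply div_pos (by linarith) hC₂pos
  set g : ℝ → ℝ := fun s => u₁ s / u₂ s with hgdef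
  have hgd : ∀ x : ℝ, 0 < x → HasDerivAt g
      ((deriv u₁ x * u₂ x - u₁ x * deriv u₂ x) / (u₂ x) ^ 2) x := fun x hx =>
    (hasDerivAt_of_cd2 h1 hx).div (hasDerivAt_of_cd2 h2 hx) (ne_of_gt (pos2 x hx))
  set φ : ℝ → ℝ := fun s => g s + c * Real.log s with hφdef
  have hφd : ∀ x : ℝ, 0 < x → HasDerivAt φ
      ((deriv u₁ x * u₂ x - u₁ x * deriv u₂ x) / (u₂ x) ^ 2 + c * x⁻¹) x := by
    intro x hx
    exact (hgd x hx).add ((Real.hasDerivAt_log (ne_of_gt hx)).const_mul c)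
  have hφanti : AntitoneOn φ (Set.Ioc 0 m) := by
    refine antiOn_of_hasDerivAt_nonpos (convex_Ioc 0 m)
      (f' := fun x => (deriv u₁ x * u₂ x - u₁ x * deriv u₂ x) / (u₂ x) ^ 2 + c * x⁻¹)
      (fun x hx => hφd x hx.1) ?_
    intro x hx
    rw [interior_Ioc] at hx
    obtain ⟨hx0, hxm⟩ := hx
    set n : ℝ := deriv u₁ x * u₂ x - u₁ x * deriv u₂ x with hn
    set p : ℝ := x ^ (N - 1) with hp
    set d : ℝ := (u₂ x) ^ 2 with hd
    have hppos : 0 < p := pow_pos hx0 _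
    have hdpos : 0 < d := pow_pos (pos2 x hx0) 2
    have hpx : p ≤ x := by
      have h1x : x ^ (N - 1) ≤ x ^ 1 :=
        pow_le_pow_of_le_one hx0.le (le_trans hxm.le hm1) (by omega)
      rwa [pow_one] at h1x
    have hdC : d ≤ C₂ := hC₂ x ⟨hx0.le, le_trans hxm.le hmr₁⟩
    have h3 : p * n ≤ W₁ := hmono x ⟨hx0, le_trans hxm.le hmr₁⟩
    have h6 : n * x ≤ (W₁ / p) * x := by
      apply mul_le_mul_of_nonneg_right _ hx0.le
      rw [le_div_iff₀ hppos]
      linarith [h3]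
    have h7 : (W₁ / p) * x ≤ W₁ := by
      have hxp1 : 1 ≤ x / p := (le_div_iff₀ hppos).mpr (by linarith)
      have := mul_le_mul_of_nonpos_left hxp1 (le_of_lt hneg)
      rw [mul_one] at this
      calc (W₁ / p) * x = W₁ * (x / p) := by ring
        _ ≤ W₁ := this
    have h8 : c * d ≤ -W₁ := by
      have hdc1 : d / C₂ ≤ 1 := (div_le_one hC₂pos).mpr hdC
      have := mul_le_mul_of_nonneg_left hdc1 (by linarith : (0:ℝ) ≤ -W₁)
      rw [mul_one] at this
      calc c * d = (-W₁) * (d / C₂) := by rw [hcdef]; ring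
        _ ≤ -W₁ := this
    have h67 : n * x ≤ W₁ := le_trans h6 h7
    have key : n * x + c * d ≤ 0 := by linarith [h67, h8]
    have heq : n / d + c * x⁻¹ = (n * x + c * d) / (d * x) := by
      field_simp
    show n / d + c * x⁻¹ ≤ 0
    rw [heq]
    exact div_nonpos_of_nonpos_of_nonneg key (by positivity)
  -- bound on g
  have hgcont : ContinuousOn g (Set.Icc 0 m) := by
    apply ContinuousOn.div (h1c.mono (Set.Icc_subset_Ici_self))
      (h2c.mono (Set.Icc_subset_Ici_self))
    intro x hx
    exact ne_of_gt (hu2pos x hx.1)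
  obtain ⟨B, hB⟩ := (isCompact_Icc (a := (0:ℝ)) (b := m)).exists_bound_of_continuousOn hgcont
  have hmIcc : m ∈ Set.Icc (0:ℝ) m := ⟨hm0.le, le_refl m⟩
  have hgmB : g m ≤ B := le_trans (le_abs_self _) (hB m hmIcc)
  set L : ℝ := Real.log m - (B - g m) / c - 1 with hLdef
  set r : ℝ := Real.exp L with hrdef
  have hrpos : 0 < r := Real.exp_pos L
  have hrm : r < m := by
    have hL : L < Real.log m := by
      have : 0 ≤ (B - g m) / c := div_nonneg (by linarith) hcpos.le
      rw [hLdef]; linarith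
    calc r = Real.exp L := rfl
      _ < Real.exp (Real.log m) := Real.exp_lt_exp.mpr hL
      _ = m := Real.exp_log hm0
  have hφ := hφanti (Set.mem_Ioc.mpr ⟨hrpos, hrm.le⟩) (Set.mem_Ioc.mpr ⟨hm0, le_refl m⟩) hrm.le
  -- φ m ≤ φ r
  have hlogr : Real.log r = L := Real.log_exp L
  have hgr : B + c ≤ g r := by
    have : g m + c * Real.log m ≤ g r + c * L := by
      simpa [hφdef, hlogr] using hφ
    have hcL : c * (Real.log m - L) = (B - g m) + c := by
      rw [hLdef]
      field_simp
      ring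
    nlinarith
  have : g r ≤ B := le_trans (le_abs_self _) (hB r ⟨hrpos.le, hrm.le⟩)
  linarith
end NZ

lemma ev_coercive {N : ℕ} {V a b u : ℝ → ℝ} {δ θ : ℝ}
    (ha_supp : HasCompactSupport a) (hb_supp : HasCompactSupport b)
    (hθ2 : ∃ M : ℝ, ∀ᶠ r : ℝ in atTop, M ≤ V r - θ * Real.log r)
    (pos : ∀ r : ℝ, 0 < r → 0 < u r)
    (ode : ∀ r : ℝ, 0 < r →
      deriv (deriv u) r + ((N : ℝ) - 1) / r * deriv u r
        - (V r + δ * a r) * u r + (1 + δ * b r) * (u r * Real.log (u r ^ 2)) = 0)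
    (htend : Filter.Tendsto (fun r : ℝ => r ^ (-(θ / 2)) * u r) Filter.atTop (nhds 0)) :
    ∃ R : ℝ, 1 ≤ R ∧ ∀ r, R ≤ r →
      u r ≤ deriv (deriv u) r + ((N : ℝ) - 1) / r * deriv u r := by
  obtain ⟨M, hM⟩ := hθ2
  set ε : ℝ := Real.exp ((M - 1) / 2) with hεdef
  have hεpos : 0 < ε := Real.exp_pos _
  have hev : ∀ᶠ r : ℝ in atTop, |r ^ (-(θ / 2)) * u r| < ε := by
    have h := Metric.tendsto_nhds.mp htend ε hεpos
    simpa only [Real.dist_eq, sub_zero] using h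
  have hcomb : ∀ᶠ r : ℝ in atTop, u r ≤ deriv (deriv u) r + ((N : ℝ) - 1) / r * deriv u r := by
    filter_upwards [hev, hM, ev_zero_of_hcs ha_supp, ev_zero_of_hcs hb_supp,
      eventually_ge_atTop (1:ℝ)] with r h1 h2 h3 h4 h5
    have hr0 : (0:ℝ) < r := lt_of_lt_of_le one_pos h5
    have hupos := pos r hr0
    have hub : u r < ε * r ^ (θ / 2) := by
      have hrp : (0:ℝ) < r ^ (θ / 2) := Real.rpow_pos_of_pos hr0 _
      have hx : r ^ (-(θ / 2)) * u r < ε := lt_of_le_of_lt (le_abs_self _) h1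
      have hid : r ^ (θ / 2) * (r ^ (-(θ / 2)) * u r) = u r := by
        rw [← mul_assoc, ← Real.rpow_add hr0]
        simp
      calc u r = r ^ (θ / 2) * (r ^ (-(θ / 2)) * u r) := hid.symm
        _ < r ^ (θ / 2) * ε := by
            apply mul_lt_mul_of_pos_left hx hrp
        _ = ε * r ^ (θ / 2) := mul_comm _ _
    have hlog : Real.log (u r ^ 2) ≤ (M - 1) + θ * Real.log r := by
      have h2log : Real.log (u r ^ 2) = 2 * Real.log (u r) := by
        rw [Real.log_pow]; push_cast; ring
      have : Real.log (u r) < Real.log (ε * r ^ (θ / 2)) := Real.log_lt_log hupos hub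
      have hrhs : Real.log (ε * r ^ (θ / 2)) = (M - 1) / 2 + (θ / 2) * Real.log r := by
        rw [Real.log_mul (ne_of_gt hεpos) (ne_of_gt (Real.rpow_pos_of_pos hr0 _)),
          Real.log_rpow hr0, hεdef, Real.log_exp]
      nlinarith [this, hrhs, h2log]
    have hVge : M + θ * Real.log r ≤ V r := by linarith
    have hfac : 1 ≤ V r - Real.log (u r ^ 2) := by linarith
    have he := ode r hr0
    rw [h3, h4] at he
    have he' : deriv (deriv u) r + ((N : ℝ) - 1) / r * deriv u r
        = u r * (V r - Real.log (u r ^ 2)) := by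
      ring_nf
      ring_nf at he
      linarith
    rw [he']
    nlinarith [hupos, hfac]
  obtain ⟨R, hR⟩ := eventually_atTop.mp hcomb
  exact ⟨max R 1, le_max_right _ _, fun r hr => hR r (le_trans (le_max_left _ _) hr)⟩

lemma decay_bound {N : ℕ} {u : ℝ → ℝ} {θ : ℝ} (hN : 2 ≤ N)
    (hcd : ContDiffOn ℝ 2 u (Set.Ioi 0)) (pos : ∀ r : ℝ, 0 < r → 0 < u r)
    {R₀ : ℝ} (hR₀ : 1 ≤ R₀)
    (hco : ∀ r, R₀ ≤ r → u r ≤ deriv (deriv u) r + ((N : ℝ) - 1) / r * deriv u r)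
    (htend : Filter.Tendsto (fun r : ℝ => r ^ (-(θ / 2)) * u r) Filter.atTop (nhds 0)) :
    ∃ A : ℝ, 0 < A ∧ ∃ R₁ : ℝ, 1 ≤ R₁ ∧ ∀ r, R₁ ≤ r → u r ≤ A * Real.exp (-(r / 2)) := by
  have hR₀pos : (0:ℝ) < R₀ := lt_of_lt_of_le one_pos hR₀
  set q : ℝ → ℝ := fun r => r ^ (N - 1) * deriv u r with hqdef
  set qd : ℝ → ℝ := fun r =>
    ((N - 1 : ℕ) : ℝ) * r ^ (N - 1 - 1) * deriv u r + r ^ (N - 1) * deriv (deriv u) r with hqddef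
  have hqd : ∀ r : ℝ, 0 < r → HasDerivAt q (qd r) r := fun r hr =>
    (hasDerivAt_pow (N - 1) r).mul (hasDerivAt_deriv_of_cd2 hcd hr)
  have hqdval : ∀ r : ℝ, 0 < r →
      qd r = r ^ (N - 1) * (deriv (deriv u) r + ((N : ℝ) - 1) / r * deriv u r) := by
    intro r hr
    have hNc : ((N - 1 : ℕ) : ℝ) = (N : ℝ) - 1 := by
      push_cast [Nat.cast_sub (by omega : 1 ≤ N)]; ring
    have hkey : r ^ (N - 1) = r ^ (N - 1 - 1) * r := by
      rw [← pow_succ]; congr 1; omega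
    rw [hqddef]
    simp only []
    rw [hNc, hkey]
    field_simp
    ring
  have hqlb : ∀ r, R₀ ≤ r → r ^ (N - 1) * u r ≤ qd r := by
    intro r hr
    have hr0 : (0:ℝ) < r := lt_of_lt_of_le hR₀pos hr
    rw [hqdval r hr0]
    exact mul_le_mul_of_nonneg_left (hco r hr) (le_of_lt (pow_pos hr0 _))
  by_cases hcase : ∃ r₀, R₀ ≤ r₀ ∧ 0 ≤ deriv u r₀
  · -- growth case : contradiction
    exfalso
    obtain ⟨r₀, hr₀R, hr₀d⟩ := hcase
    have hr₀pos : (0:ℝ) < r₀ := lt_of_lt_of_le hR₀pos hr₀R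
    have hqmono : StrictMonoOn q (Set.Ici r₀) := by
      refine strictMonoOn_of_hasDerivAt_pos (convex_Ici r₀)
        (fun r hr => hqd r (lt_of_lt_of_le hr₀pos hr)) ?_
      intro r hr
      rw [interior_Ici] at hr
      have hrr : R₀ ≤ r := le_trans hr₀R (le_of_lt hr)
      have hr0 : (0:ℝ) < r := lt_of_lt_of_le hR₀pos hrr
      calc (0:ℝ) < r ^ (N - 1) * u r := mul_pos (pow_pos hr0 _) (pos r hr0)
        _ ≤ qd r := hqlb r hrr
    have hc₀ : 0 < q (r₀ + 1) := by
      have h1 : q r₀ < q (r₀ + 1) :=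
        hqmono (self_mem_Ici) (by simp : r₀ + 1 ∈ Set.Ici r₀) (by linarith)
      have h2 : 0 ≤ q r₀ := mul_nonneg (le_of_lt (pow_pos hr₀pos _)) hr₀d
      linarith
    have hdpos : ∀ r, r₀ + 1 ≤ r → 0 < deriv u r := by
      intro r hr
      have hqr : 0 < q r := by
        rcases eq_or_lt_of_le hr with h | h
        · rwa [← h]
        · exact lt_trans hc₀ (hqmono (by simp : r₀ + 1 ∈ Set.Ici r₀)
            (by simp; linarith : r ∈ Set.Ici r₀) h)
      by_contra hcon
      push_neg at hcon
      have hr0 : (0:ℝ) < r := by linarith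
      have : q r ≤ 0 := mul_nonpos_of_nonneg_of_nonpos (le_of_lt (pow_pos hr0 _)) hcon
      linarith
    have humono : MonotoneOn u (Set.Ici (r₀ + 1)) := by
      refine monoOn_of_hasDerivAt_nonneg (convex_Ici _) (f' := deriv u)
        (fun r hr => hasDerivAt_of_cd2 hcd (by simp at hr; linarith)) ?_
      intro r hr
      rw [interior_Ici] at hr
      exact le_of_lt (hdpos r (le_of_lt hr))
    set d : ℝ := u (r₀ + 1) with hddef
    have hdpos' : 0 < d := pos _ (by linarith)
    have hind : ∀ k : ℕ, ∃ C, 0 < C ∧ ∃ R, r₀ + 1 ≤ R ∧ ∀ r, R ≤ r → C * r ^ k ≤ u r := by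
      intro k
      induction k with
      | zero =>
        exact ⟨d, hdpos', r₀ + 1, le_refl _, fun r hr => by
          simpa using humono (self_mem_Ici) (by simpa using hr) hr⟩
      | succ k ih =>
        obtain ⟨C, hC, R, hRr, hR⟩ := ih
        have hR1 : (1:ℝ) ≤ R := by linarith
        have hRpos : (0:ℝ) < R := by linarith
        have hstep1 : ∀ r, R ≤ r → C * r ^ (N - 1 + k) ≤ qd r := by
          intro r hr
          have hrR₀ : R₀ ≤ r := by linarith
          have hr0 : (0:ℝ) < r := by linarith
          calc C * r ^ (N - 1 + k) = r ^ (N - 1) * (C * r ^ k) := by rw [pow_add]; ring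
            _ ≤ r ^ (N - 1) * u r :=
                mul_le_mul_of_nonneg_left (hR r hr) (le_of_lt (pow_pos hr0 _))
            _ ≤ qd r := hqlb r hrR₀
        obtain ⟨C', hC', R', hRR', hq'⟩ := integrate_step (N - 1 + k) hC hR1
          (fun r hr => hqd r (by linarith)) hstep1
        have hstep2 : ∀ r, R' ≤ r → C' * r ^ (k + 1) ≤ deriv u r := by
          intro r hr
          have hr0 : (0:ℝ) < r := by linarith
          have hp : (0:ℝ) < r ^ (N - 1) := pow_pos hr0 _
          have h1 : C' * r ^ (N - 1 + k + 1) ≤ q r := hq' r hr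
          have h2 : r ^ (N - 1 + k + 1) = r ^ (N - 1) * r ^ (k + 1) := by
            rw [show N - 1 + k + 1 = (N - 1) + (k + 1) by omega, pow_add]
          rw [h2] at h1
          have h1' : C' * (r ^ (N - 1) * r ^ (k + 1)) ≤ r ^ (N - 1) * deriv u r := by
            simpa [hqdef] using h1
          refine le_of_mul_le_mul_left ?_ hp
          calc r ^ (N - 1) * (C' * r ^ (k + 1)) = C' * (r ^ (N - 1) * r ^ (k + 1)) := by ring
            _ ≤ r ^ (N - 1) * deriv u r := h1'
        have hR'1 : (1:ℝ) ≤ R' := le_trans hR1 hRR'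
        obtain ⟨C'', hC'', R'', hRR'', hu''⟩ := integrate_step (k + 1) hC' hR'1
          (fun r hr => hasDerivAt_of_cd2 hcd (by linarith)) hstep2
        refine ⟨C'', hC'', max R'' (r₀ + 1), le_max_right _ _, ?_⟩
        intro r hr
        have hrR'' : R'' ≤ r := le_trans (le_max_left _ _) hr
        have hr1 : (1:ℝ) ≤ r := by
          have : (1:ℝ) ≤ R'' := le_trans hR'1 hRR''
          linarith
        calc C'' * r ^ (k + 1) ≤ C'' * r ^ (k + 1 + 1) := by
              apply mul_le_mul_of_nonneg_left _ (le_of_lt hC'')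
              exact pow_le_pow_right₀ hr1 (by omega)
          _ ≤ u r := hu'' r hrR''
    obtain ⟨k, hk⟩ := exists_nat_gt (θ / 2)
    obtain ⟨C, hC, R, hRr, hR⟩ := hind k
    have hgrow : Filter.Tendsto (fun r : ℝ => C * r ^ ((k : ℝ) - θ / 2)) atTop atTop :=
      (tendsto_rpow_atTop (by linarith)).const_mul_atTop hC
    have hev1 : ∀ᶠ r : ℝ in atTop, 1 ≤ r ^ (-(θ / 2)) * u r := by
      filter_upwards [hgrow.eventually_ge_atTop 1, eventually_ge_atTop (max R 1)]
        with r h1 h2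
      have hrR : R ≤ r := le_trans (le_max_left _ _) h2
      have hr1 : (1:ℝ) ≤ r := le_trans (le_max_right _ _) h2
      have hr0 : (0:ℝ) < r := by linarith
      have hrp : (0:ℝ) < r ^ (-(θ / 2)) := Real.rpow_pos_of_pos hr0 _
      have hkey : r ^ (-(θ / 2)) * (C * r ^ k) = C * r ^ ((k : ℝ) - θ / 2) := by
        rw [← Real.rpow_natCast r k,
          show r ^ (-(θ / 2)) * (C * r ^ ((k:ℕ):ℝ)) = C * (r ^ (-(θ / 2)) * r ^ ((k:ℕ):ℝ)) from
            by ring, ← Real.rpow_add hr0]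
        congr 2
        ring
      calc (1:ℝ) ≤ C * r ^ ((k : ℝ) - θ / 2) := h1
        _ = r ^ (-(θ / 2)) * (C * r ^ k) := hkey.symm
        _ ≤ r ^ (-(θ / 2)) * u r := mul_le_mul_of_nonneg_left (hR r hrR) (le_of_lt hrp)
    have hev2 : ∀ᶠ r : ℝ in atTop, r ^ (-(θ / 2)) * u r < 1 := by
      have h := Metric.tendsto_nhds.mp htend 1 one_pos
      filter_upwards [h] with r hr
      rw [Real.dist_eq, sub_zero] at hr
      exact lt_of_le_of_lt (le_abs_self _) hr
    obtain ⟨r, h1, h2⟩ := (hev1.and hev2).exists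
    linarith
  · -- decay case
    push_neg at hcase
    have huanti : AntitoneOn u (Set.Ici R₀) := by
      refine antiOn_of_hasDerivAt_nonpos (convex_Ici _) (f' := deriv u)
        (fun r hr => hasDerivAt_of_cd2 hcd (lt_of_lt_of_le hR₀pos hr)) ?_
      intro r hr
      rw [interior_Ici] at hr
      exact le_of_lt (hcase r (le_of_lt hr))
    have hsmall : ∀ ε : ℝ, 0 < ε → ∃ T, R₀ ≤ T ∧ ∀ r, T ≤ r → u r ≤ ε := by
      intro ε hε
      by_contra hcon
      push_neg at hcon
      have hlb : ∀ r, R₀ ≤ r → ε ≤ u r := by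
        intro r hr
        obtain ⟨r', hr', hεr'⟩ := hcon (max r R₀) (le_max_right _ _)
        have h1 : r ≤ r' := le_trans (le_max_left _ _) hr'
        have h2 : r' ∈ Set.Ici R₀ := le_trans (le_max_right _ _) hr'
        exact le_of_lt (lt_of_lt_of_le hεr' (huanti hr h2 h1))
      have hstep : ∀ r, R₀ ≤ r → ε * r ^ (N - 1) ≤ qd r := by
        intro r hr
        have hr0 : (0:ℝ) < r := lt_of_lt_of_le hR₀pos hr
        calc ε * r ^ (N - 1) ≤ u r * r ^ (N - 1) :=
              mul_le_mul_of_nonneg_right (hlb r hr) (le_of_lt (pow_pos hr0 _))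
          _ = r ^ (N - 1) * u r := mul_comm _ _
          _ ≤ qd r := hqlb r hr
      obtain ⟨C', hC', R', hRR', hq'⟩ := integrate_step (N - 1) hε hR₀
        (fun r hr => hqd r (lt_of_lt_of_le hR₀pos hr)) hstep
      set r := max R' R₀ with hrdef
      have hr0 : (0:ℝ) < r := lt_of_lt_of_le hR₀pos (le_max_right _ _)
      have h1 : C' * r ^ (N - 1 + 1) ≤ q r := hq' r (le_max_left _ _)
      have h2 : q r < 0 :=
        mul_neg_of_pos_of_neg (pow_pos hr0 _) (hcase r (le_max_right _ _))
      have h3 : 0 < C' * r ^ (N - 1 + 1) := mul_pos hC' (pow_pos hr0 _)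
      linarith
    -- maximum principle comparison with A * exp(-(r/2))
    set A : ℝ := u R₀ * Real.exp (R₀ / 2) with hAdef
    have hApos : 0 < A := mul_pos (pos R₀ hR₀pos) (Real.exp_pos _)
    set φ : ℝ → ℝ := fun r => A * Real.exp (-(r / 2)) with hφdef
    set dφ : ℝ → ℝ := fun r => -(A / 2) * Real.exp (-(r / 2)) with hdφdef
    set ddφ : ℝ → ℝ := fun r => A / 4 * Real.exp (-(r / 2)) with hddφdef
    have hexp : ∀ r : ℝ, HasDerivAt (fun x : ℝ => Real.exp (-(x / 2)))
        (Real.exp (-(r / 2)) * (-(1 / 2))) r := by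
      intro r
      have h1 : HasDerivAt (fun x : ℝ => -(x / 2)) (-(1 / 2)) r :=
        ((hasDerivAt_id r).div_const 2).neg
      simpa using h1.exp
    have hφd : ∀ r : ℝ, HasDerivAt φ (dφ r) r := by
      intro r
      have := (hexp r).const_mul A
      refine this.congr_deriv ?_
      rw [hdφdef]; ring
    have hdφd : ∀ r : ℝ, HasDerivAt dφ (ddφ r) r := by
      intro r
      have := (hexp r).const_mul (-(A / 2))
      refine this.congr_deriv ?_
      rw [hddφdef]; ring
    refine ⟨A, hApos, R₀, hR₀, ?_⟩
    by_contra hcon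
    push_neg at hcon
    obtain ⟨rs, hrsR, hrsφ⟩ := hcon
    set ψ : ℝ → ℝ := fun r => u r - φ r with hψdef
    set s : ℝ := ψ rs with hsdef
    have hspos : 0 < s := by simp only [hsdef, hψdef, hφdef]; linarith
    obtain ⟨T, hTR, hTs⟩ := hsmall (s / 2) (half_pos hspos)
    set T' : ℝ := max T (rs + 1) with hT'def
    have hψT' : ∀ r, T' ≤ r → ψ r ≤ s / 2 := by
      intro r hr
      have h1 : u r ≤ s / 2 := hTs r (le_trans (le_max_left _ _) hr)
      have h2 : 0 < φ r := mul_pos hApos (Real.exp_pos _)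
      simp only [hψdef]; linarith
    have hrsT' : rs ≤ T' := le_trans (by linarith) (le_max_right _ _)
    have hR₀T' : R₀ ≤ T' := le_trans hrsR hrsT'
    have hucont : ContinuousOn u (Set.Icc R₀ T') := by
      apply (hcd.continuousOn).mono
      intro x hx
      exact lt_of_lt_of_le hR₀pos hx.1
    have hφc : Continuous φ :=
      continuous_const.mul (Real.continuous_exp.comp ((continuous_id.div_const 2).neg))
    have hψcont : ContinuousOn ψ (Set.Icc R₀ T') := hucont.sub hφc.continuousOn
    obtain ⟨x₀, hx₀K, hmax⟩ := isCompact_Icc.exists_isMaxOn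
      (Set.nonempty_Icc.mpr hR₀T') hψcont
    have hmax' : ∀ y ∈ Set.Icc R₀ T', ψ y ≤ ψ x₀ := fun y hy => hmax hy
    have hψx₀ : s ≤ ψ x₀ := hmax' rs ⟨hrsR, hrsT'⟩
    have hψR₀ : ψ R₀ = 0 := by
      have hone : Real.exp (R₀ / 2) * Real.exp (-(R₀ / 2)) = 1 := by
        rw [← Real.exp_add]; simp
      simp only [hψdef, hφdef, hAdef]
      rw [mul_assoc, hone, mul_one, sub_self]
    have hx₀ne1 : x₀ ≠ R₀ := by
      intro h
      rw [h, hψR₀] at hψx₀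
      linarith
    have hx₀ne2 : x₀ ≠ T' := by
      intro h
      have h9 : ψ T' ≤ s / 2 := hψT' T' (le_refl _)
      rw [h] at hψx₀
      have h10 : s ≤ s / 2 := le_trans hψx₀ h9
      exact absurd h10 (not_le.mpr (half_lt_self hspos))
    have hx₀mem : x₀ ∈ Set.Ioo R₀ T' :=
      ⟨lt_of_le_of_ne hx₀K.1 (Ne.symm hx₀ne1), lt_of_le_of_ne hx₀K.2 hx₀ne2⟩
    have hx₀pos : 0 < x₀ := lt_of_lt_of_le hR₀pos hx₀K.1
    have hloc : IsLocalMax ψ x₀ := by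
      have hnhds : Set.Ioo R₀ T' ∈ nhds x₀ := isOpen_Ioo.mem_nhds hx₀mem
      filter_upwards [hnhds] with y hy
      exact hmax' y ⟨le_of_lt hy.1, le_of_lt hy.2⟩
    have hψd : ∀ r : ℝ, 0 < r → HasDerivAt ψ (deriv u r - dφ r) r := fun r hr =>
      (hasDerivAt_of_cd2 hcd hr).sub (hφd r)
    have hd0 : deriv u x₀ - dφ x₀ = 0 := by
      rw [← (hψd x₀ hx₀pos).deriv]
      exact hloc.deriv_eq_zero
    set h : ℝ → ℝ := fun r => deriv u r - dφ r with hhdef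
    have hh0 : h x₀ = 0 := hd0
    set c : ℝ := deriv (deriv u) x₀ - ddφ x₀ with hcdef
    have hhd : HasDerivAt h c x₀ := (hasDerivAt_deriv_of_cd2 hcd hx₀pos).sub (hdφd x₀)
    have hφx₀pos : 0 < φ x₀ := mul_pos hApos (Real.exp_pos _)
    have hcpos : 0 < c := by
      have h1 := hco x₀ hx₀K.1
      have h2 : deriv u x₀ = dφ x₀ := by linarith [hd0]
      have h3 : dφ x₀ < 0 := mul_neg_of_neg_of_pos (by linarith) (Real.exp_pos _)
      have h4 : 0 ≤ ((N : ℝ) - 1) / x₀ := div_nonneg (by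
        have : (2:ℝ) ≤ (N:ℝ) := by exact_mod_cast hN
        linarith) (le_of_lt hx₀pos)
      have h5 : ((N : ℝ) - 1) / x₀ * deriv u x₀ ≤ 0 := by
        rw [h2]; exact mul_nonpos_of_nonneg_of_nonpos h4 (le_of_lt h3)
      have h6 : u x₀ ≤ deriv (deriv u) x₀ := by linarith
      have h7 : ψ x₀ + φ x₀ = u x₀ := by simp only [hψdef]; ring
      have h8 : ddφ x₀ = φ x₀ / 4 := by
        simp only [hddφdef, hφdef]; ring
      rw [hcdef, h8]
      nlinarith [hψx₀, hspos, hφx₀pos]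
    -- slope argument to the left of x₀
    have hsl : Filter.Tendsto (slope h x₀) (nhdsWithin x₀ (Set.Iio x₀)) (nhds c) :=
      (hasDerivAt_iff_tendsto_slope.mp hhd).mono_left
        (nhdsWithin_mono x₀ (fun y hy => ne_of_lt hy))
    have hev : ∀ᶠ x in nhdsWithin x₀ (Set.Iio x₀), c / 2 < slope h x₀ x :=
      hsl.eventually (eventually_gt_nhds (by linarith))
    obtain ⟨aa, haa, hsub⟩ := mem_nhdsLT_iff_exists_Ioo_subset.mp hev
    have hhx : ∀ x ∈ Set.Ioo aa x₀, h x < 0 := by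
      intro x hx
      have hslx : c / 2 < slope h x₀ x := hsub hx
      rw [slope_def_field, hh0, sub_zero] at hslx
      have hneg : x - x₀ < 0 := by linarith [hx.2]
      have h1 := (lt_div_iff_of_neg hneg).mp hslx
      have h2 : c / 2 * (x - x₀) < 0 := mul_neg_of_pos_of_neg (half_pos hcpos) hneg
      exact lt_trans h1 h2
    set a' : ℝ := max aa R₀ with ha'def
    have ha'lt : a' < x₀ := max_lt haa hx₀mem.1
    have ha'R₀ : R₀ ≤ a' := le_max_right _ _
    set a'' : ℝ := (a' + x₀) / 2 with ha''def
    have ha''1 : a' < a'' := by rw [ha''def]; linarith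
    have ha''2 : a'' < x₀ := by rw [ha''def]; linarith
    have ha''pos : 0 < a'' := by linarith
    have hanti : StrictAntiOn ψ (Set.Icc a'' x₀) := by
      refine strictAntiOn_of_hasDerivAt_neg (convex_Icc _ _) (f' := h)
        (fun r hr => hψd r (by linarith [hr.1])) ?_
      intro x hx
      rw [interior_Icc] at hx
      apply hhx
      constructor
      · have : aa ≤ a' := le_max_left _ _
        linarith [hx.1]
      · exact hx.2
    have hc1 : ψ x₀ < ψ a'' := hanti (Set.mem_Icc.mpr ⟨le_refl _, le_of_lt ha''2⟩)
      (Set.mem_Icc.mpr ⟨le_of_lt ha''2, le_refl _⟩) ha''2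
    have hc2 : ψ a'' ≤ ψ x₀ := hmax' a'' ⟨by linarith, by linarith [hx₀K.2]⟩
    exact absurd hc2 (not_le.mpr hc1)

lemma ratio_grows {N : ℕ} {u₁ u₂ : ℝ → ℝ} (hN : 2 ≤ N)
    (h1 : ContDiffOn ℝ 2 u₁ (Set.Ioi 0)) (h2 : ContDiffOn ℝ 2 u₂ (Set.Ioi 0))
    (pos2 : ∀ r : ℝ, 0 < r → 0 < u₂ r)
    {c A R : ℝ} (hc : 0 < c) (hA : 0 < A) (hR : 1 ≤ R)
    (hb : ∀ r, R ≤ r → u₂ r ≤ A * Real.exp (-(r / 2)))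
    (hW : ∀ r, R ≤ r → c ≤ r ^ (N - 1) * (deriv u₁ r * u₂ r - u₁ r * deriv u₂ r)) :
    ∀ K K₂ : ℝ, ∃ r, K₂ ≤ r ∧ K ≤ u₁ r / u₂ r := by
  -- power dominated by exponential
  have hpe : ∀ᶠ x : ℝ in atTop, x ^ (N - 1) ≤ Real.exp x := by
    have h := tendsto_pow_mul_exp_neg_atTop_nhds_zero (N - 1)
    have h1' : ∀ᶠ x : ℝ in atTop, x ^ (N - 1) * Real.exp (-x) < 1 :=
      h.eventually (eventually_lt_nhds one_pos)
    filter_upwards [h1'] with x hx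
    rw [Real.exp_neg, ← div_eq_mul_inv] at hx
    exact le_of_lt ((div_lt_one (Real.exp_pos _)).mp hx)
  obtain ⟨R₂, hR₂⟩ := eventually_atTop.mp hpe
  set R' : ℝ := max R R₂ with hR'def
  have hR'R : R ≤ R' := le_max_left _ _
  have hR'1 : (1:ℝ) ≤ R' := le_trans hR hR'R
  have hA2 : (0:ℝ) < A ^ 2 := by positivity
  -- derivative lower bound on [R',∞)
  have hgd : ∀ r, R' ≤ r → HasDerivAt (fun s => u₁ s / u₂ s)
      ((deriv u₁ r * u₂ r - u₁ r * deriv u₂ r) / (u₂ r) ^ 2) r := by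
    intro r hr
    have hr0 : (0:ℝ) < r := by linarith
    exact (hasDerivAt_of_cd2 h1 hr0).div (hasDerivAt_of_cd2 h2 hr0) (ne_of_gt (pos2 r hr0))
  have hglb : ∀ r, R' ≤ r →
      c / A ^ 2 ≤ (deriv u₁ r * u₂ r - u₁ r * deriv u₂ r) / (u₂ r) ^ 2 := by
    intro r hr
    have hr0 : (0:ℝ) < r := by linarith
    have hu2 : 0 < u₂ r := pos2 r hr0
    have hp : (0:ℝ) < r ^ (N - 1) := pow_pos hr0 _
    set D : ℝ := r ^ (N - 1) * (u₂ r) ^ 2 with hDdef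
    have hD : 0 < D := mul_pos hp (pow_pos hu2 2)
    have hDA : D ≤ A ^ 2 := by
      have hb' : u₂ r ≤ A * Real.exp (-(r / 2)) := hb r (by linarith)
      have h1' : (u₂ r) ^ 2 ≤ (A * Real.exp (-(r / 2))) ^ 2 :=
        pow_le_pow_left₀ hu2.le hb' 2
      have h2' : (A * Real.exp (-(r / 2))) ^ 2 = A ^ 2 * Real.exp (-r) := by
        rw [mul_pow]
        congr 1
        rw [sq, ← Real.exp_add]
        ring_nf
      have h3' : r ^ (N - 1) ≤ Real.exp r := hR₂ r (le_trans (le_max_right _ _) hr)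
      calc D ≤ Real.exp r * (A ^ 2 * Real.exp (-r)) := by
            rw [hDdef]
            apply mul_le_mul h3' (by rw [← h2']; exact h1') (by positivity) (Real.exp_pos r).le
        _ = A ^ 2 * (Real.exp r * Real.exp (-r)) := by ring
        _ = A ^ 2 := by rw [← Real.exp_add]; norm_num
    have hWr : c ≤ r ^ (N - 1) * (deriv u₁ r * u₂ r - u₁ r * deriv u₂ r) := hW r (by linarith)
    have hkey : (deriv u₁ r * u₂ r - u₁ r * deriv u₂ r) / (u₂ r) ^ 2
        = (r ^ (N - 1) * (deriv u₁ r * u₂ r - u₁ r * deriv u₂ r)) / D := by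
      rw [hDdef]
      field_simp
    rw [hkey, div_le_div_iff₀ hA2 hD]
    have hWpos : 0 < r ^ (N - 1) * (deriv u₁ r * u₂ r - u₁ r * deriv u₂ r) :=
      lt_of_lt_of_le hc hWr
    nlinarith [mul_le_mul_of_nonneg_left hDA hc.le,
      mul_le_mul_of_nonneg_right hWr hA2.le]
  -- monotone comparison function
  have hmono : MonotoneOn (fun r => u₁ r / u₂ r - c / A ^ 2 * r) (Set.Ici R') := by
    refine monoOn_of_hasDerivAt_nonneg (convex_Ici _)
      (f' := fun r => (deriv u₁ r * u₂ r - u₁ r * deriv u₂ r) / (u₂ r) ^ 2 - c / A ^ 2) ?_ ?_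
    · intro r hr
      exact ((hgd r hr).sub (((hasDerivAt_id r).const_mul (c / A ^ 2)).congr_deriv
        (by ring)))
    · intro r hr
      rw [interior_Ici] at hr
      have := hglb r (le_of_lt hr)
      linarith
  intro K K₂
  set gR : ℝ := u₁ R' / u₂ R' with hgRdef
  set M0 : ℝ := max 0 (K - gR) with hM0def
  have hM0 : 0 ≤ M0 := le_max_left _ _
  have hM0K : K - gR ≤ M0 := le_max_right _ _
  have hAc : (0:ℝ) < A ^ 2 / c := by positivity
  set r : ℝ := max K₂ (R' + M0 * (A ^ 2 / c) + 1) with hrdef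
  have hrR' : R' ≤ r := by
    have h1' : R' ≤ R' + M0 * (A ^ 2 / c) + 1 := by nlinarith
    exact le_trans h1' (le_max_right _ _)
  refine ⟨r, le_max_left _ _, ?_⟩
  have hmr : gR - c / A ^ 2 * R' ≤ u₁ r / u₂ r - c / A ^ 2 * r :=
    hmono (self_mem_Ici) hrR' hrR'
  have hrlb : R' + M0 * (A ^ 2 / c) + 1 ≤ r := le_max_right _ _
  have hkey : c / A ^ 2 * (M0 * (A ^ 2 / c)) = M0 := by
    field_simp
  have hca : (0:ℝ) < c / A ^ 2 := by positivity
  nlinarith [mul_le_mul_of_nonneg_left (by linarith [hrlb] : M0 * (A ^ 2 / c) + 1 ≤ r - R')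
    hca.le]

set_option maxHeartbeats 2000000

/-- Let `u₁, u₂` be two solutions of (P3) with `u₁(0) < u₂(0)`. Then the set
`{r > 0 : u₁(r) > u₂(r)}` is nonempty; its infimum `ρ` is positive, `u₁(ρ) = u₂(ρ)`,
`u₁ < u₂` on `(0,ρ)` and `(u₁/u₂)' > 0` on `(0,ρ)`. Moreover, if `u₁ > u₂` on `(ρ,∞)`,
then `(u₁/u₂)' > 0` on all of `(0,∞)`. -/
theorem intersection_structure (N : ℕ) (hN : 2 ≤ N) (V a b : ℝ → ℝ) (δ θ : ℝ)
    (hV1 : CondV1 N V) (hVab : CondVab a b) (hδ : 0 ≤ δ) (hθ : MemTheta N V θ)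
    (u₁ u₂ : ℝ → ℝ)
    (hu₁ : SolP3 N (fun r => V r + δ * a r) (fun r => 1 + δ * b r) θ u₁)
    (hu₂ : SolP3 N (fun r => V r + δ * a r) (fun r => 1 + δ * b r) θ u₂)
    (h0 : u₁ 0 < u₂ 0) :
    {r : ℝ | 0 < r ∧ u₂ r < u₁ r}.Nonempty ∧
    0 < sInf {r : ℝ | 0 < r ∧ u₂ r < u₁ r} ∧
    u₁ (sInf {r : ℝ | 0 < r ∧ u₂ r < u₁ r}) = u₂ (sInf {r : ℝ | 0 < r ∧ u₂ r < u₁ r}) ∧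
    (∀ r : ℝ, 0 < r → r < sInf {r : ℝ | 0 < r ∧ u₂ r < u₁ r} → u₁ r < u₂ r) ∧
    (∀ r : ℝ, 0 < r → r < sInf {r : ℝ | 0 < r ∧ u₂ r < u₁ r} →
      0 < deriv (fun s => u₁ s / u₂ s) r) ∧
    ((∀ r : ℝ, sInf {r : ℝ | 0 < r ∧ u₂ r < u₁ r} < r → u₂ r < u₁ r) →
      ∀ r : ℝ, 0 < r → 0 < deriv (fun s => u₁ s / u₂ s) r) := by
  obtain ⟨cont1, sm1, ode1', pos1, hd01, tend1⟩ := hu₁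
  obtain ⟨cont2, sm2, ode2', pos2, hd02, tend2⟩ := hu₂
  obtain ⟨haC, ha_supp, hbC, hb_supp, hbnn, hb1⟩ := hVab
  have ode1 : ∀ r : ℝ, 0 < r →
      deriv (deriv u₁) r + ((N : ℝ) - 1) / r * deriv u₁ r
        - (V r + δ * a r) * u₁ r + (1 + δ * b r) * (u₁ r * Real.log (u₁ r ^ 2)) = 0 :=
    fun r hr => ode1' r hr
  have ode2 : ∀ r : ℝ, 0 < r →
      deriv (deriv u₂) r + ((N : ℝ) - 1) / r * deriv u₂ r
        - (V r + δ * a r) * u₂ r + (1 + δ * b r) * (u₂ r * Real.log (u₂ r ^ 2)) = 0 :=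
    fun r hr => ode2' r hr
  have hBpos : ∀ r : ℝ, 0 < 1 + δ * b r := by
    intro r
    have h1 := hbnn r
    nlinarith
  -- boundary values
  have hu10 : 0 ≤ u₁ 0 := by
    have htd : Filter.Tendsto u₁ (nhdsWithin 0 (Set.Ioi 0)) (nhds (u₁ 0)) :=
      (cont1 0 Set.self_mem_Ici).tendsto.mono_left (nhdsWithin_mono 0 Set.Ioi_subset_Ici_self)
    exact ge_of_tendsto htd (eventually_mem_nhdsWithin.mono (fun x hx => (pos1 x hx).le))
  have hu20pos : 0 < u₂ 0 := lt_of_le_of_lt hu10 h0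
  -- positivity of u₂ on Ici
  have hu2pos' : ∀ x ∈ Set.Ici (0:ℝ), 0 < u₂ x := by
    intro x hx
    rcases eq_or_lt_of_le (Set.mem_Ici.mp hx) with h | h
    · rwa [← h]
    · exact pos2 x h
  -- the Wronskian and its derivative
  set W : ℝ → ℝ := Wr N u₁ u₂ with hWdef
  set val : ℝ → ℝ := fun r =>
    r ^ (N - 1) * ((1 + δ * b r) * (u₁ r * u₂ r) *
      (Real.log (u₂ r ^ 2) - Real.log (u₁ r ^ 2))) with hvaldef
  have hWd : ∀ r : ℝ, 0 < r → HasDerivAt W (val r) r := fun r hr =>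
    W_hasDerivAt hN sm1 sm2 ode1 ode2 hr
  -- sign of val
  have hval_nonneg : ∀ r : ℝ, 0 < r → u₁ r ≤ u₂ r → 0 ≤ val r := by
    intro r hr hle
    have h1 := pos1 r hr; have h2 := pos2 r hr
    have hlog : Real.log (u₁ r ^ 2) ≤ Real.log (u₂ r ^ 2) :=
      Real.log_le_log (by positivity) (by nlinarith)
    have hB := hBpos r
    have : (0:ℝ) ≤ (1 + δ * b r) * (u₁ r * u₂ r) *
        (Real.log (u₂ r ^ 2) - Real.log (u₁ r ^ 2)) := by
      apply mul_nonneg (le_of_lt (by positivity))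
      linarith
    exact mul_nonneg (by positivity) this
  have hval_pos : ∀ r : ℝ, 0 < r → u₁ r < u₂ r → 0 < val r := by
    intro r hr hlt
    have h1 := pos1 r hr; have h2 := pos2 r hr
    have hlog : Real.log (u₁ r ^ 2) < Real.log (u₂ r ^ 2) :=
      Real.log_lt_log (by positivity) (by nlinarith)
    have hB := hBpos r
    apply mul_pos (by positivity)
    apply mul_pos (by positivity)
    linarith
  have hval_neg : ∀ r : ℝ, 0 < r → u₂ r < u₁ r → val r < 0 := by
    intro r hr hlt
    have h1 := pos1 r hr; have h2 := pos2 r hr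
    have hlog : Real.log (u₂ r ^ 2) < Real.log (u₁ r ^ 2) :=
      Real.log_lt_log (by positivity) (by nlinarith)
    have hB := hBpos r
    apply mul_neg_of_pos_of_neg (by positivity)
    apply mul_neg_of_pos_of_neg (by positivity)
    linarith
  -- ratio derivative
  have hgd : ∀ x : ℝ, 0 < x → HasDerivAt (fun s => u₁ s / u₂ s)
      ((deriv u₁ x * u₂ x - u₁ x * deriv u₂ x) / (u₂ x) ^ 2) x := fun x hx =>
    (hasDerivAt_of_cd2 sm1 hx).div (hasDerivAt_of_cd2 sm2 hx) (ne_of_gt (pos2 x hx))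
  have hgval : ∀ x : ℝ, 0 < x →
      (deriv u₁ x * u₂ x - u₁ x * deriv u₂ x) / (u₂ x) ^ 2
        = W x / (x ^ (N - 1) * (u₂ x) ^ 2) := by
    intro x hx
    have hp : (x:ℝ) ^ (N - 1) ≠ 0 := ne_of_gt (pow_pos hx _)
    rw [hWdef]
    show _ = (x ^ (N - 1) * (deriv u₁ x * u₂ x - u₁ x * deriv u₂ x)) / _
    rw [mul_div_mul_left _ _ hp]
  -- decay bounds
  obtain ⟨R₀₂, hR₀₂, hco₂⟩ := ev_coercive ha_supp hb_supp hθ.2 pos2 ode2 tend2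
  obtain ⟨A₂, hA₂, R₁₂, hR₁₂, hdec₂⟩ := decay_bound hN sm2 pos2 hR₀₂ hco₂ tend2
  obtain ⟨R₀₁, hR₀₁, hco₁⟩ := ev_coercive ha_supp hb_supp hθ.2 pos1 ode1 tend1
  obtain ⟨A₁, hA₁, R₁₁, hR₁₁, hdec₁⟩ := decay_bound hN sm1 pos1 hR₀₁ hco₁ tend1
  -- tendsto of u₁, u₂ at 0 from the right
  have htd₁ : Filter.Tendsto u₁ (nhdsWithin 0 (Set.Ioi 0)) (nhds (u₁ 0)) :=
    (cont1 0 Set.self_mem_Ici).tendsto.mono_left (nhdsWithin_mono 0 Set.Ioi_subset_Ici_self)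
  have htd₂ : Filter.Tendsto u₂ (nhdsWithin 0 (Set.Ioi 0)) (nhds (u₂ 0)) :=
    (cont2 0 Set.self_mem_Ici).tendsto.mono_left (nhdsWithin_mono 0 Set.Ioi_subset_Ici_self)
  -- ===== Step A : nonemptiness =====
  set S : Set ℝ := {r : ℝ | 0 < r ∧ u₂ r < u₁ r} with hSdef
  have hSne : S.Nonempty := by
    by_contra hS
    rw [Set.not_nonempty_iff_eq_empty] at hS
    have hle : ∀ r : ℝ, 0 < r → u₁ r ≤ u₂ r := by
      intro r hr
      by_contra hcon
      push_neg at hcon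
      have : r ∈ S := ⟨hr, hcon⟩
      rw [hS] at this
      exact this
    have hWmono : MonotoneOn W (Set.Ioi 0) := by
      refine monoOn_of_hasDerivAt_nonneg (convex_Ioi 0) (f' := val)
        (fun r hr => hWd r hr) ?_
      intro r hr
      rw [interior_Ioi] at hr
      exact hval_nonneg r hr (hle r hr)
    by_cases hWpc : ∃ r₀, 0 < r₀ ∧ 0 < W r₀
    · obtain ⟨r₀, hr₀, hWr₀⟩ := hWpc
      set R : ℝ := max R₁₂ r₀ with hRdef
      have hR1 : (1:ℝ) ≤ R := le_trans hR₁₂ (le_max_left _ _)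
      have hWlb : ∀ r, R ≤ r → W r₀ ≤ r ^ (N - 1) *
          (deriv u₁ r * u₂ r - u₁ r * deriv u₂ r) := by
        intro r hr
        have hr0 : (0:ℝ) < r := lt_of_lt_of_le (lt_of_lt_of_le one_pos hR1) hr
        have h1 : W r₀ ≤ W r := hWmono (Set.mem_Ioi.mpr hr₀)
          (Set.mem_Ioi.mpr hr0) (le_trans (le_max_right _ _) hr)
        exact h1
      have := ratio_grows hN sm1 sm2 pos2 hWr₀ hA₂ hR1
        (fun r hr => hdec₂ r (le_trans (le_max_left _ _) hr)) hWlb 2 1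
      obtain ⟨r, hr1, hr2⟩ := this
      have hr0 : (0:ℝ) < r := by linarith
      have : u₁ r / u₂ r ≤ 1 := (div_le_one (pos2 r hr0)).mpr (hle r hr0)
      linarith
    · push_neg at hWpc
      by_cases hWneg : ∃ r₁, 0 < r₁ ∧ W r₁ < 0
      · obtain ⟨r₁, hr₁, hWr₁⟩ := hWneg
        refine near_zero_false hN cont1 cont2 sm1 sm2 pos2 hu20pos hr₁ ?_ hWr₁
        intro x hx
        exact hWmono (Set.mem_Ioi.mpr hx.1) (Set.mem_Ioi.mpr hr₁) hx.2
      · push_neg at hWneg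
        have hW0 : ∀ r : ℝ, 0 < r → W r = 0 := fun r hr =>
          le_antisymm (hWpc r hr) (hWneg r hr)
        have heqq : ∀ r : ℝ, 0 < r → u₁ r = u₂ r := by
          intro r hr
          have hev : W =ᶠ[nhds r] (fun _ => (0:ℝ)) := by
            filter_upwards [isOpen_Ioi.mem_nhds (Set.mem_Ioi.mpr hr)] with x hx
            exact hW0 x hx
          have hdW : deriv W r = 0 := by
            rw [Filter.EventuallyEq.deriv_eq hev]
            exact deriv_const r 0
          have hval0 : val r = 0 := by
            rw [← (hWd r hr).deriv]
            exact hdW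
          have h1 := pos1 r hr; have h2 := pos2 r hr
          have hB := hBpos r
          have hΔ : Real.log (u₂ r ^ 2) - Real.log (u₁ r ^ 2) = 0 := by
            rcases lt_trichotomy (u₁ r) (u₂ r) with hlt | heq' | hgt
            · exfalso
              have hv := hval_pos r hr hlt
              rw [hval0] at hv; exact lt_irrefl 0 hv
            · rw [heq']; ring
            · exfalso
              have hv := hval_neg r hr hgt
              rw [hval0] at hv; exact lt_irrefl 0 hv
          have hsq : u₁ r ^ 2 = u₂ r ^ 2 := by
            have h3 : Real.log (u₁ r ^ 2) = Real.log (u₂ r ^ 2) := by linarith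
            have h4 := congrArg Real.exp h3
            rwa [Real.exp_log (by positivity), Real.exp_log (by positivity)] at h4
          have hfac : (u₁ r - u₂ r) * (u₁ r + u₂ r) = 0 := by linear_combination hsq
          rcases mul_eq_zero.mp hfac with h5 | h5
          · linarith
          · linarith
        have hu1eq : u₁ 0 = u₂ 0 := by
          have h1 : Filter.Tendsto u₂ (nhdsWithin 0 (Set.Ioi 0)) (nhds (u₁ 0)) := by
            apply htd₁.congr'
            exact eventually_mem_nhdsWithin.mono (fun x hx => heqq x hx)
          exact tendsto_nhds_unique h1 htd₂
        linarith
  refine ⟨hSne, ?_⟩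
  -- lower bound near 0
  have hct : ContinuousWithinAt (fun x => u₂ x - u₁ x) (Set.Ici 0) 0 :=
    ((cont2 0 Set.self_mem_Ici).sub (cont1 0 Set.self_mem_Ici))
  have hev0 : ∀ᶠ x in nhdsWithin 0 (Set.Ici 0), 0 < u₂ x - u₁ x :=
    hct.eventually (eventually_gt_nhds (by show (0:ℝ) < u₂ 0 - u₁ 0; linarith))
  obtain ⟨t, htopen, ht0, htsub⟩ := mem_nhdsWithin.mp hev0
  obtain ⟨ε, hεpos, hball⟩ := Metric.isOpen_iff.mp htopen 0 ht0
  have hsmall : ∀ x : ℝ, 0 ≤ x → x < ε → u₁ x < u₂ x := by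
    intro x h1 h2
    have hxt : x ∈ t := hball (by
      rw [Metric.mem_ball, Real.dist_eq, sub_zero, abs_of_nonneg h1]; exact h2)
    have h3 : 0 < u₂ x - u₁ x := htsub ⟨hxt, h1⟩
    linarith
  have hεlb : ∀ r ∈ S, ε ≤ r := by
    intro r hr
    by_contra hcon
    push_neg at hcon
    exact absurd hr.2 (not_lt.mpr (le_of_lt (hsmall r hr.1.le hcon)))
  have hbdd : BddBelow S := ⟨0, fun r hr => hr.1.le⟩
  set ρ : ℝ := sInf S with hρdef
  have hρε : ε ≤ ρ := le_csInf hSne hεlb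
  have hρpos : 0 < ρ := lt_of_lt_of_le hεpos hρε
  refine ⟨hρpos, ?_⟩
  have hρle : ∀ r ∈ S, ρ ≤ r := fun r hr => csInf_le hbdd hr
  -- u₁ ≤ u₂ before ρ
  have hC : ∀ r : ℝ, 0 < r → r < ρ → u₁ r ≤ u₂ r := by
    intro r h1 h2
    by_contra hcon
    push_neg at hcon
    exact absurd (hρle r ⟨h1, hcon⟩) (not_le.mpr h2)
  -- equality at ρ
  have hFcont : ContinuousOn (fun x => u₂ x - u₁ x) (Set.Ici 0) := cont2.sub cont1
  have heqρ : u₁ ρ = u₂ ρ := by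
    have hdir1 : u₂ ρ ≤ u₁ ρ := by
      have hTclosed : IsClosed {x : ℝ | x ∈ Set.Ici ε ∧ (u₂ x - u₁ x) ∈ Set.Iic 0} := by
        have hcl : IsClosed (Set.Ici ε ∩ (fun x => u₂ x - u₁ x) ⁻¹' Set.Iic 0) :=
          (hFcont.mono (Set.Ici_subset_Ici.mpr hεpos.le)).preimage_isClosed_of_isClosed
            isClosed_Ici isClosed_Iic
        exact hcl
      have hsub2 : S ⊆ {x : ℝ | x ∈ Set.Ici ε ∧ (u₂ x - u₁ x) ∈ Set.Iic 0} := by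
        intro x hx
        exact ⟨hεlb x hx, by simp [Set.mem_Iic]; linarith [hx.2]⟩
      have hmem := closure_minimal hsub2 hTclosed (csInf_mem_closure hSne hbdd)
      have := hmem.2
      simp only [Set.mem_Iic] at this
      linarith
    have hdir2 : u₁ ρ ≤ u₂ ρ := by
      have hTclosed : IsClosed {x : ℝ | x ∈ Set.Ici (ε/2) ∧ (u₂ x - u₁ x) ∈ Set.Ici 0} := by
        have hcl : IsClosed (Set.Ici (ε/2) ∩ (fun x => u₂ x - u₁ x) ⁻¹' Set.Ici 0) :=
          (hFcont.mono (Set.Ici_subset_Ici.mpr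
            (by positivity : (0:ℝ) ≤ ε/2))).preimage_isClosed_of_isClosed
            isClosed_Ici isClosed_Ici
        exact hcl
      have hsub2 : Set.Ico (ε/2) ρ ⊆
          {x : ℝ | x ∈ Set.Ici (ε/2) ∧ (u₂ x - u₁ x) ∈ Set.Ici 0} := by
        intro x hx
        refine ⟨hx.1, ?_⟩
        have := hC x (by linarith [hx.1]) hx.2
        simp only [Set.mem_Ici]
        linarith
      have hρmem : ρ ∈ closure (Set.Ico (ε/2) ρ) := by
        rw [closure_Ico (by linarith : ε/2 ≠ ρ)]
        exact ⟨by linarith, le_refl _⟩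
      have hmem := closure_minimal hsub2 hTclosed hρmem
      have := hmem.2
      simp only [Set.mem_Ici] at this
      linarith
    linarith
  refine ⟨heqρ, ?_⟩
  -- W monotone and nonnegative on (0, ρ)
  have hWmonoρ : MonotoneOn W (Set.Ioo 0 ρ) := by
    refine monoOn_of_hasDerivAt_nonneg (convex_Ioo 0 ρ) (f' := val)
      (fun r hr => hWd r hr.1) ?_
    intro r hr
    rw [interior_Ioo] at hr
    exact hval_nonneg r hr.1 (hC r hr.1 hr.2)
  have hWnn : ∀ r ∈ Set.Ioo 0 ρ, 0 ≤ W r := by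
    intro r hr
    by_contra hcon
    push_neg at hcon
    refine near_zero_false hN cont1 cont2 sm1 sm2 pos2 hu20pos hr.1 ?_ hcon
    intro x hx
    rcases eq_or_lt_of_le hx.2 with h | h
    · rw [h]
    · exact hWmonoρ ⟨hx.1, lt_trans h hr.2⟩ hr (le_of_lt h)
  -- strict inequality before ρ
  have hstrict : ∀ r : ℝ, 0 < r → r < ρ → u₁ r < u₂ r := by
    intro r₀ h1 h2
    rcases lt_or_eq_of_le (hC r₀ h1 h2) with h | heq₀
    · exact h
    · exfalso
      -- g monotone on (0, ρ)
      have hgmono : MonotoneOn (fun s => u₁ s / u₂ s) (Set.Ioo 0 ρ) := by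
        refine monoOn_of_hasDerivAt_nonneg (convex_Ioo 0 ρ)
          (f' := fun x => (deriv u₁ x * u₂ x - u₁ x * deriv u₂ x) / (u₂ x) ^ 2)
          (fun x hx => hgd x hx.1) ?_
        intro x hx
        rw [interior_Ioo] at hx
        show 0 ≤ (deriv u₁ x * u₂ x - u₁ x * deriv u₂ x) / (u₂ x) ^ 2
        rw [hgval x hx.1]
        exact div_nonneg (hWnn x hx)
          (le_of_lt (mul_pos (pow_pos hx.1 _) (pow_pos (pos2 x hx.1) 2)))
      have hg1 : ∀ x ∈ Set.Ioo r₀ ρ, u₁ x = u₂ x := by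
        intro x hx
        have hx0 : (0:ℝ) < x := lt_trans h1 hx.1
        have hge : 1 ≤ u₁ x / u₂ x := by
          have hmm : u₁ r₀ / u₂ r₀ ≤ u₁ x / u₂ x := hgmono ⟨h1, h2⟩ ⟨hx0, hx.2⟩ hx.1.le
          rw [heq₀, div_self (ne_of_gt (pos2 r₀ h1))] at hmm
          exact hmm
        have hle2 : u₁ x / u₂ x ≤ 1 := (div_le_one (pos2 x hx0)).mpr (hC x hx0 hx.2)
        have hdiv1 : u₁ x / u₂ x = 1 := le_antisymm hle2 hge
        rw [div_eq_one_iff_eq (ne_of_gt (pos2 x hx0))] at hdiv1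
        exact hdiv1
      set xb : ℝ := (r₀ + ρ) / 2 with hxbdef
      have hxb : xb ∈ Set.Ioo r₀ ρ := ⟨by rw [hxbdef]; linarith, by rw [hxbdef]; linarith⟩
      have hxb0 : (0:ℝ) < xb := lt_trans h1 hxb.1
      -- W = 0 at xb
      have hWxb : W xb = 0 := by
        have hev : (fun s => u₁ s / u₂ s) =ᶠ[nhds xb] (fun _ => (1:ℝ)) := by
          filter_upwards [isOpen_Ioo.mem_nhds hxb] with y hy
          have hy0 : (0:ℝ) < y := lt_trans h1 hy.1
          rw [hg1 y hy, div_self (ne_of_gt (pos2 y hy0))]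
        have hdg : deriv (fun s => u₁ s / u₂ s) xb = 0 := by
          rw [Filter.EventuallyEq.deriv_eq hev]
          exact deriv_const xb 1
        have h4 : (deriv u₁ xb * u₂ xb - u₁ xb * deriv u₂ xb) / (u₂ xb) ^ 2 = 0 := by
          rw [← (hgd xb hxb0).deriv]
          exact hdg
        rw [hgval xb hxb0] at h4
        have h5 : (0:ℝ) < xb ^ (N - 1) * (u₂ xb) ^ 2 :=
          mul_pos (pow_pos hxb0 _) (pow_pos (pos2 xb hxb0) 2)
        exact (div_eq_zero_iff.mp h4).resolve_right (ne_of_gt h5)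
      -- W vanishes on (0, xb)
      have hW0' : ∀ y ∈ Set.Ioo 0 xb, W y = 0 := by
        intro y hy
        have hymem : y ∈ Set.Ioo 0 ρ := ⟨hy.1, lt_trans hy.2 hxb.2⟩
        have h5 : W y ≤ W xb := hWmonoρ hymem ⟨hxb0, hxb.2⟩ hy.2.le
        have h6 := hWnn y hymem
        rw [hWxb] at h5
        linarith
      -- g constant = 1 on (0, xb)
      have hgantixb : AntitoneOn (fun s => u₁ s / u₂ s) (Set.Ioo 0 xb) := by
        refine antiOn_of_hasDerivAt_nonpos (convex_Ioo 0 xb)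
          (f' := fun x => (deriv u₁ x * u₂ x - u₁ x * deriv u₂ x) / (u₂ x) ^ 2)
          (fun x hx => hgd x hx.1) ?_
        intro x hx
        rw [interior_Ioo] at hx
        show (deriv u₁ x * u₂ x - u₁ x * deriv u₂ x) / (u₂ x) ^ 2 ≤ 0
        rw [hgval x hx.1, hW0' x hx]
        simp
      have hgmonoxb : MonotoneOn (fun s => u₁ s / u₂ s) (Set.Ioo 0 xb) := by
        refine monoOn_of_hasDerivAt_nonneg (convex_Ioo 0 xb)
          (f' := fun x => (deriv u₁ x * u₂ x - u₁ x * deriv u₂ x) / (u₂ x) ^ 2)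
          (fun x hx => hgd x hx.1) ?_
        intro x hx
        rw [interior_Ioo] at hx
        show 0 ≤ (deriv u₁ x * u₂ x - u₁ x * deriv u₂ x) / (u₂ x) ^ 2
        rw [hgval x hx.1, hW0' x hx]
        simp
      set xp : ℝ := (r₀ + xb) / 2 with hxpdef
      have hxp : xp ∈ Set.Ioo r₀ ρ := ⟨by rw [hxpdef]; linarith [hxb.1],
        by rw [hxpdef]; linarith [hxb.2, hxb.1]⟩
      have hxpxb : xp ∈ Set.Ioo 0 xb := ⟨lt_trans h1 hxp.1, by rw [hxpdef]; linarith [hxb.1]⟩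
      have hgxp : u₁ xp / u₂ xp = 1 := by
        rw [hg1 xp hxp, div_self (ne_of_gt (pos2 xp (lt_trans h1 hxp.1)))]
      have hgy : ∀ y ∈ Set.Ioo 0 xb, u₁ y = u₂ y := by
        intro y hy
        have hg1' : u₁ y / u₂ y = 1 := by
          rcases le_total y xp with h | h
          · have ha : u₁ y / u₂ y ≤ u₁ xp / u₂ xp := hgmonoxb hy hxpxb h
            have hb' : u₁ xp / u₂ xp ≤ u₁ y / u₂ y := hgantixb hy hxpxb h
            rw [hgxp] at ha hb'
            linarith
          · have ha : u₁ xp / u₂ xp ≤ u₁ y / u₂ y := hgmonoxb hxpxb hy h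
            have hb' : u₁ y / u₂ y ≤ u₁ xp / u₂ xp := hgantixb hxpxb hy h
            rw [hgxp] at ha hb'
            linarith
        rw [div_eq_one_iff_eq (ne_of_gt (pos2 y hy.1))] at hg1'
        exact hg1'
      have hu1eq : u₁ 0 = u₂ 0 := by
        have hmem : Set.Ioo (0:ℝ) xb ∈ nhdsWithin 0 (Set.Ioi 0) :=
          Ioo_mem_nhdsGT_of_mem ⟨le_refl 0, hxb0⟩
        have h1' : Filter.Tendsto u₂ (nhdsWithin 0 (Set.Ioi 0)) (nhds (u₁ 0)) := by
          apply htd₁.congr'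
          filter_upwards [hmem] with x hx
          exact hgy x hx
        exact tendsto_nhds_unique h1' htd₂
      linarith
  refine ⟨hstrict, ?_⟩
  -- W strictly positive on (0, ρ)
  have hWsm : StrictMonoOn W (Set.Ioo 0 ρ) := by
    refine strictMonoOn_of_hasDerivAt_pos (convex_Ioo 0 ρ) (f' := val)
      (fun r hr => hWd r hr.1) ?_
    intro r hr
    rw [interior_Ioo] at hr
    exact hval_pos r hr.1 (hstrict r hr.1 hr.2)
  have hWposρ : ∀ r ∈ Set.Ioo 0 ρ, 0 < W r := by
    intro r hr
    have hhalf : r / 2 ∈ Set.Ioo 0 ρ := ⟨by linarith [hr.1], by linarith [hr.1, hr.2]⟩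
    have h1 := hWsm hhalf hr (by linarith [hr.1])
    have h2 := hWnn _ hhalf
    linarith
  have hderiv_pos : ∀ r : ℝ, 0 < r → r < ρ → 0 < deriv (fun s => u₁ s / u₂ s) r := by
    intro r h1 h2
    rw [(hgd r h1).deriv, hgval r h1]
    exact div_pos (hWposρ r ⟨h1, h2⟩) (mul_pos (pow_pos h1 _) (pow_pos (pos2 r h1) 2))
  refine ⟨hderiv_pos, ?_⟩
  -- ===== last part =====
  intro hafter r hr
  -- W(ρ) > 0
  have hWρ : 0 < W ρ := by
    set x₀ : ℝ := ρ / 2 with hx₀def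
    have hx₀mem : x₀ ∈ Set.Ioo 0 ρ := ⟨by linarith, by linarith⟩
    have hWx₀ := hWposρ x₀ hx₀mem
    have hcont : Filter.Tendsto W (nhdsWithin ρ (Set.Iio ρ)) (nhds (W ρ)) :=
      (hWd ρ hρpos).continuousAt.tendsto.mono_left nhdsWithin_le_nhds
    have hev : ∀ᶠ x in nhdsWithin ρ (Set.Iio ρ), W x₀ ≤ W x := by
      filter_upwards [Ioo_mem_nhdsLT_of_mem (Set.mem_Ioc.mpr ⟨hx₀mem.2, le_refl ρ⟩)]
        with x hx
      exact (hWsm hx₀mem ⟨lt_trans hx₀mem.1 hx.1, hx.2⟩ hx.1).le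
    have := ge_of_tendsto hcont hev
    linarith
  have hWgt : ∀ s : ℝ, ρ ≤ s → 0 < W s := by
    by_contra hcon
    push_neg at hcon
    obtain ⟨r₃, hr₃ρ, hWr₃⟩ := hcon
    have hr₃gt : ρ < r₃ := by
      rcases eq_or_lt_of_le hr₃ρ with h | h
      · exfalso; rw [← h] at hWr₃; linarith
      · exact h
    have hWanti : StrictAntiOn W (Set.Ici ρ) := by
      refine strictAntiOn_of_hasDerivAt_neg (convex_Ici ρ) (f' := val)
        (fun s hs => hWd s (lt_of_lt_of_le hρpos hs)) ?_
      intro s hs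
      rw [interior_Ici] at hs
      exact hval_neg s (lt_trans hρpos hs) (hafter s hs)
    have hc : 0 < -W (r₃ + 1) := by
      have hmem1 : r₃ + 1 ∈ Set.Ici ρ := Set.mem_Ici.mpr (by linarith)
      have h9 := hWanti (Set.mem_Ici.mpr hr₃ρ) hmem1 (lt_add_one r₃)
      linarith
    set R : ℝ := max R₁₁ (r₃ + 1) with hRdef
    have hR1 : (1:ℝ) ≤ R := le_trans hR₁₁ (le_max_left _ _)
    have hWlb : ∀ s, R ≤ s → -W (r₃ + 1) ≤ s ^ (N - 1) *
        (deriv u₂ s * u₁ s - u₂ s * deriv u₁ s) := by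
      intro s hs
      have hs1 : r₃ + 1 ≤ s := le_trans (le_max_right _ _) hs
      have hWs : W s ≤ W (r₃ + 1) := by
        rcases eq_or_lt_of_le hs1 with h | h
        · rw [← h]
        · exact (hWanti (Set.mem_Ici.mpr (by linarith)) (Set.mem_Ici.mpr (by linarith)) h).le
      have hkey : s ^ (N - 1) * (deriv u₂ s * u₁ s - u₂ s * deriv u₁ s) = -W s := by
        rw [hWdef]
        show _ = -(s ^ (N - 1) * (deriv u₁ s * u₂ s - u₁ s * deriv u₂ s))
        ring
      rw [hkey]
      linarith
    have := ratio_grows (u₁ := u₂) (u₂ := u₁) hN sm2 sm1 pos1 hc hA₁ hR1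
      (fun s hs => hdec₁ s (le_trans (le_max_left _ _) hs)) hWlb 1 (ρ + 1)
    obtain ⟨s, hs1, hs2⟩ := this
    have hs0 : (0:ℝ) < s := by linarith
    have h1 : u₁ s ≤ u₂ s := (one_le_div (pos1 s hs0)).mp hs2
    have h2 : u₂ s < u₁ s := hafter s (by linarith)
    linarith
  rcases lt_or_ge r ρ with h | h
  · exact hderiv_pos r hr h
  · rw [(hgd r hr).deriv, hgval r hr]
    exact div_pos (hWgt r h) (mul_pos (pow_pos hr _) (pow_pos (pos2 r hr) 2))
end
end

section
/- Assume (Vab), (V1), δ ≥ 0, and let ρ > 0. Suppose u₁, u₂ ∈ C([0,ρ)) ∩ C²((0,ρ)) are differentiable at 0 and satisfy uᵢ'' + ((N−1)/r)uᵢ' − V_δ(r)uᵢ + B_δ(r)·uᵢ·log uᵢ² = 0 on (0,ρ), uᵢ'(0) = 0, and uᵢ > 0 on (0,ρ) for i = 1,2. If u₁ < u₂ on [0,ρ), then (u₁/u₂)'(r) > 0 for all r ∈ (0,ρ). -/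
open Real Filter Set MeasureTheory

noncomputable section

open scoped Topology

/-- Assume (Vab), (V1), `δ ≥ 0` and `ρ > 0`. If `u₁, u₂` solve the equation on
`(0,ρ)`, are positive there, continuous on `[0,ρ)` with `uᵢ'(0) = 0` and `u₁ < u₂` on
`[0,ρ)`, then `(u₁/u₂)' > 0` on `(0,ρ)`. -/
theorem ratio_monotone (N : ℕ) (hN : 2 ≤ N) (V a b : ℝ → ℝ) (δ ρ : ℝ)
    (hV1 : CondV1 N V) (hVab : CondVab a b) (hδ : 0 ≤ δ) (hρ : 0 < ρ)
    (u₁ u₂ : ℝ → ℝ)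
    (hc₁ : ContinuousOn u₁ (Set.Ico 0 ρ)) (hC₁ : ContDiffOn ℝ 2 u₁ (Set.Ioo 0 ρ))
    (hd₁ : HasDerivWithinAt u₁ 0 (Set.Ico 0 ρ) 0)
    (hode₁ : ∀ r : ℝ, 0 < r → r < ρ →
      deriv (deriv u₁) r + ((N : ℝ) - 1) / r * deriv u₁ r
        - (V r + δ * a r) * u₁ r + (1 + δ * b r) * (u₁ r * Real.log (u₁ r ^ 2)) = 0)
    (hpos₁ : ∀ r : ℝ, 0 < r → r < ρ → 0 < u₁ r)
    (hc₂ : ContinuousOn u₂ (Set.Ico 0 ρ)) (hC₂ : ContDiffOn ℝ 2 u₂ (Set.Ioo 0 ρ))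
    (hd₂ : HasDerivWithinAt u₂ 0 (Set.Ico 0 ρ) 0)
    (hode₂ : ∀ r : ℝ, 0 < r → r < ρ →
      deriv (deriv u₂) r + ((N : ℝ) - 1) / r * deriv u₂ r
        - (V r + δ * a r) * u₂ r + (1 + δ * b r) * (u₂ r * Real.log (u₂ r ^ 2)) = 0)
    (hpos₂ : ∀ r : ℝ, 0 < r → r < ρ → 0 < u₂ r)
    (hlt : ∀ r : ℝ, 0 ≤ r → r < ρ → u₁ r < u₂ r) :
    ∀ r : ℝ, 0 < r → r < ρ → 0 < deriv (fun s => u₁ s / u₂ s) r := by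
  obtain ⟨n, rfl⟩ : ∃ n, N = n + 2 := ⟨N - 2, by omega⟩
  have hop : IsOpen (Set.Ioo (0:ℝ) ρ) := isOpen_Ioo
  -- basic derivative facts
  have hd1 : ∀ r ∈ Set.Ioo (0:ℝ) ρ, HasDerivAt u₁ (deriv u₁ r) r := fun r hr =>
    ((hC₁.differentiableOn (by norm_num)).differentiableAt (hop.mem_nhds hr)).hasDerivAt
  have hd2 : ∀ r ∈ Set.Ioo (0:ℝ) ρ, HasDerivAt u₂ (deriv u₂ r) r := fun r hr =>
    ((hC₂.differentiableOn (by norm_num)).differentiableAt (hop.mem_nhds hr)).hasDerivAt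
  have hC₁' : ContDiffOn ℝ 1 (deriv u₁) (Set.Ioo 0 ρ) := hC₁.deriv_of_isOpen hop (by norm_num)
  have hC₂' : ContDiffOn ℝ 1 (deriv u₂) (Set.Ioo 0 ρ) := hC₂.deriv_of_isOpen hop (by norm_num)
  have hdd1 : ∀ r ∈ Set.Ioo (0:ℝ) ρ, HasDerivAt (deriv u₁) (deriv (deriv u₁) r) r := fun r hr =>
    ((hC₁'.differentiableOn (by norm_num)).differentiableAt (hop.mem_nhds hr)).hasDerivAt
  have hdd2 : ∀ r ∈ Set.Ioo (0:ℝ) ρ, HasDerivAt (deriv u₂) (deriv (deriv u₂) r) r := fun r hr =>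
    ((hC₂'.differentiableOn (by norm_num)).differentiableAt (hop.mem_nhds hr)).hasDerivAt
  set W : ℝ → ℝ := fun r => r ^ (n+1) * (deriv u₁ r * u₂ r - u₁ r * deriv u₂ r) with hWdef
  -- derivative of W
  have hWd : ∀ r ∈ Set.Ioo (0:ℝ) ρ, HasDerivAt W
      (r ^ (n+1) * ((1 + δ * b r) * ((u₁ r * u₂ r) *
        (Real.log (u₂ r ^ 2) - Real.log (u₁ r ^ 2))))) r := by
    intro r hr
    have hrne : r ≠ 0 := ne_of_gt hr.1
    have H : HasDerivAt W
        ((↑(n+1) * r ^ ((n+1)-1)) * (deriv u₁ r * u₂ r - u₁ r * deriv u₂ r)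
          + r ^ (n+1) * ((deriv (deriv u₁) r * u₂ r + deriv u₁ r * deriv u₂ r)
            - (deriv u₁ r * deriv u₂ r + u₁ r * deriv (deriv u₂) r))) r :=
      (hasDerivAt_pow (n+1) r).mul
        (((hdd1 r hr).mul (hd2 r hr)).sub ((hd1 r hr).mul (hdd2 r hr)))
    convert H using 1
    have h1 := hode₁ r hr.1 hr.2
    have h2 := hode₂ r hr.1 hr.2
    push_cast at h1 h2 ⊢
    have hdiv1 : ((n:ℝ)+2-1) / r * deriv u₁ r * r = ((n:ℝ)+1) * deriv u₁ r := by
      rw [div_mul_eq_mul_div, div_mul_eq_mul_div, div_eq_iff hrne]; ring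
    have hdiv2 : ((n:ℝ)+2-1) / r * deriv u₂ r * r = ((n:ℝ)+1) * deriv u₂ r := by
      rw [div_mul_eq_mul_div, div_mul_eq_mul_div, div_eq_iff hrne]; ring
    have h1' : r * deriv (deriv u₁) r + ((n:ℝ)+1) * deriv u₁ r
        - r * ((V r + δ * a r) * u₁ r)
        + r * ((1 + δ * b r) * (u₁ r * Real.log (u₁ r ^ 2))) = 0 := by
      linear_combination r * h1 - hdiv1
    have h2' : r * deriv (deriv u₂) r + ((n:ℝ)+1) * deriv u₂ r
        - r * ((V r + δ * a r) * u₂ r)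
        + r * ((1 + δ * b r) * (u₂ r * Real.log (u₂ r ^ 2))) = 0 := by
      linear_combination r * h2 - hdiv2
    linear_combination (-(r^n * u₂ r)) * h1' + (r^n * u₁ r) * h2'
  -- positivity of W'
  have hW'pos : ∀ r ∈ Set.Ioo (0:ℝ) ρ,
      0 < r ^ (n+1) * ((1 + δ * b r) * ((u₁ r * u₂ r) *
        (Real.log (u₂ r ^ 2) - Real.log (u₁ r ^ 2)))) := by
    intro r hr
    have h1 := hpos₁ r hr.1 hr.2
    have h2 := hpos₂ r hr.1 hr.2
    have hl := hlt r hr.1.le hr.2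
    have hlog : Real.log (u₁ r ^ 2) < Real.log (u₂ r ^ 2) :=
      Real.log_lt_log (by positivity) (by nlinarith)
    have hb : 0 < 1 + δ * b r := by nlinarith [hVab.2.2.2.2.1 r]
    have h3 : 0 < Real.log (u₂ r ^ 2) - Real.log (u₁ r ^ 2) := sub_pos.mpr hlog
    exact mul_pos (pow_pos hr.1 _) (mul_pos hb (mul_pos (mul_pos h1 h2) h3))
  -- W is strictly monotone
  have hWmono : StrictMonoOn W (Set.Ioo 0 ρ) := by
    apply strictMonoOn_of_deriv_pos (convex_Ioo 0 ρ)
    · exact fun r hr => (hWd r hr).continuousAt.continuousWithinAt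
    · intro r hr
      rw [interior_Ioo] at hr
      rw [(hWd r hr).deriv]
      exact hW'pos r hr
  -- derivative of the ratio
  have hq : ∀ r ∈ Set.Ioo (0:ℝ) ρ, HasDerivAt (fun s => u₁ s / u₂ s)
      (W r / (r ^ (n+1) * u₂ r ^ 2)) r := by
    intro r hr
    have h2 := hpos₂ r hr.1 hr.2
    have H : HasDerivAt (fun s => u₁ s / u₂ s) _ r := (hd1 r hr).div (hd2 r hr) (ne_of_gt h2)
    convert H using 1
    rw [hWdef]
    have hrne : r ≠ 0 := ne_of_gt hr.1
    field_simp
  -- main claim : W > 0 on (0, ρ)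
  have hWpos : ∀ r ∈ Set.Ioo (0:ℝ) ρ, 0 < W r := by
    intro r₀ hr₀
    by_contra hle
    push_neg at hle
    have hhalf : r₀ / 2 ∈ Set.Ioo (0:ℝ) ρ := ⟨by linarith [hr₀.1], by linarith [hr₀.2, hr₀.1]⟩
    set m : ℝ := W (r₀ / 2) with hmdef
    have hm : m < 0 := lt_of_lt_of_le (hWmono hhalf hr₀ (by linarith [hr₀.1])) hle
    -- bound for u₂
    obtain ⟨x₀, hx₀, hmax⟩ := (isCompact_Icc (a := (0:ℝ)) (b := r₀/2)).exists_isMaxOn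
      ⟨0, by constructor <;> linarith [hr₀.1]⟩
      (hc₂.mono (fun x hx => ⟨hx.1, lt_of_le_of_lt hx.2 hhalf.2⟩))
    set M : ℝ := u₂ x₀ with hMdef
    have hMb : ∀ x ∈ Set.Icc (0:ℝ) (r₀/2), u₂ x ≤ M := hmax
    have hMpos : 0 < M :=
      lt_of_lt_of_le (hpos₂ (r₀/2) hhalf.1 hhalf.2) (hMb _ ⟨hhalf.1.le, le_rfl⟩)
    set r₁ : ℝ := min (r₀ / 2) 1 with hr₁def
    have hr₁pos : 0 < r₁ := lt_min hhalf.1 one_pos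
    have hr₁le : r₁ ≤ r₀ / 2 := min_le_left _ _
    have hr₁lt : r₁ < ρ := lt_of_le_of_lt hr₁le hhalf.2
    have hsub : Set.Ioc (0:ℝ) r₁ ⊆ Set.Ioo 0 ρ := fun x hx =>
      ⟨hx.1, lt_of_le_of_lt hx.2 hr₁lt⟩
    set g : ℝ → ℝ := fun s => u₁ s / u₂ s - m / M ^ 2 * Real.log s with hgdef
    have hgd : ∀ r ∈ Set.Ioc (0:ℝ) r₁, HasDerivAt g
        (W r / (r ^ (n+1) * u₂ r ^ 2) - m / M ^ 2 * r⁻¹) r := fun r hr =>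
      (hq r (hsub hr)).sub ((Real.hasDerivAt_log (ne_of_gt hr.1)).const_mul (m / M ^ 2))
    -- g is antitone on (0, r₁]
    have hanti : AntitoneOn g (Set.Ioc 0 r₁) := by
      apply antitoneOn_of_deriv_nonpos (convex_Ioc 0 r₁)
      · exact fun r hr => (hgd r hr).continuousAt.continuousWithinAt
      · intro r hr
        rw [interior_Ioc] at hr
        exact (hgd r ⟨hr.1, hr.2.le⟩).differentiableAt.differentiableWithinAt
      · intro r hr
        rw [interior_Ioc] at hr
        rw [(hgd r ⟨hr.1, hr.2.le⟩).deriv]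
        have hrIoo : r ∈ Set.Ioo (0:ℝ) ρ := hsub ⟨hr.1, hr.2.le⟩
        have hWr : W r ≤ m := (hWmono hrIoo hhalf (lt_of_lt_of_le hr.2 hr₁le)).le
        have hu2pos := hpos₂ r hrIoo.1 hrIoo.2
        have hu2le : u₂ r ≤ M := hMb r ⟨hr.1.le, le_of_lt (lt_of_lt_of_le hr.2 hr₁le)⟩
        have hrle1 : r ≤ 1 := le_of_lt (lt_of_lt_of_le hr.2 (min_le_right _ _))
        have hpow : r ^ (n+1) ≤ r := by
          calc r ^ (n+1) ≤ r ^ 1 := pow_le_pow_of_le_one hr.1.le hrle1 (by omega)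
          _ = r := pow_one r
        have hd1pos : 0 < r ^ (n+1) * u₂ r ^ 2 :=
          mul_pos (pow_pos hr.1 _) (pow_pos hu2pos 2)
        have hd2pos : 0 < r * M ^ 2 := mul_pos hr.1 (pow_pos hMpos 2)
        have hdle : r ^ (n+1) * u₂ r ^ 2 ≤ r * M ^ 2 := by
          have h1 : r ^ (n+1) * u₂ r ^ 2 ≤ r * u₂ r ^ 2 :=
            mul_le_mul_of_nonneg_right hpow (sq_nonneg _)
          have h2 : r * u₂ r ^ 2 ≤ r * M ^ 2 :=
            mul_le_mul_of_nonneg_left (pow_le_pow_left₀ hu2pos.le hu2le 2) hr.1.le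
          linarith
        have key : W r / (r ^ (n+1) * u₂ r ^ 2) ≤ m / (r * M ^ 2) := by
          rw [div_le_div_iff₀ hd1pos hd2pos]
          have e1 := mul_le_mul_of_nonneg_right hWr hd2pos.le
          have e2 := mul_le_mul_of_nonpos_left hdle hm.le
          linarith
        have keq : m / (r * M ^ 2) = m / M ^ 2 * r⁻¹ := by
          rw [mul_comm r, ← div_div, div_eq_mul_inv]
        linarith [key, keq.le, keq.ge]
    -- contradiction from the limit at 0
    have hmem : r₁ ∈ Set.Ioc (0:ℝ) r₁ := ⟨hr₁pos, le_rfl⟩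
    have hconc : ∀ x ∈ Set.Ioc (0:ℝ) r₁, g r₁ ≤ g x := fun x hx => hanti hx hmem hx.2
    -- limits
    have hnhds : 𝓝[Set.Ioo (0:ℝ) ρ] 0 = 𝓝[>] (0:ℝ) := nhdsWithin_Ioo_eq_nhdsGT hρ
    have hu20 : (0:ℝ) < u₂ 0 := by
      have h10 : 0 ≤ u₁ 0 := by
        have htend : Tendsto u₁ (𝓝[>] (0:ℝ)) (𝓝 (u₁ 0)) := by
          rw [← hnhds]
          exact (hc₁ 0 ⟨le_rfl, hρ⟩).mono_left (nhdsWithin_mono _ Set.Ioo_subset_Ico_self)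
        refine ge_of_tendsto htend ?_
        filter_upwards [self_mem_nhdsWithin, eventually_nhdsWithin_of_eventually_nhds
          (eventually_lt_nhds hρ)] with x hx hxρ
        exact (hpos₁ x hx hxρ).le
      linarith [hlt 0 le_rfl hρ]
    have htend1 : Tendsto u₁ (𝓝[>] (0:ℝ)) (𝓝 (u₁ 0)) := by
      rw [← hnhds]
      exact (hc₁ 0 ⟨le_rfl, hρ⟩).mono_left (nhdsWithin_mono _ Set.Ioo_subset_Ico_self)
    have htend2 : Tendsto u₂ (𝓝[>] (0:ℝ)) (𝓝 (u₂ 0)) := by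
      rw [← hnhds]
      exact (hc₂ 0 ⟨le_rfl, hρ⟩).mono_left (nhdsWithin_mono _ Set.Ioo_subset_Ico_self)
    have hratio : Tendsto (fun s => u₁ s / u₂ s) (𝓝[>] (0:ℝ)) (𝓝 (u₁ 0 / u₂ 0)) :=
      htend1.div htend2 (ne_of_gt hu20)
    have hcm : m / M ^ 2 < 0 := div_neg_of_neg_of_pos hm (by positivity)
    have hlogpart : Tendsto (fun s => m / M ^ 2 * Real.log s) (𝓝[>] (0:ℝ)) atTop :=
      Filter.Tendsto.const_mul_atBot_of_neg hcm Real.tendsto_log_nhdsGT_zero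
    have hgbot : Tendsto g (𝓝[>] (0:ℝ)) atBot := by
      have := hratio.add_atBot (tendsto_neg_atTop_atBot.comp hlogpart)
      simpa [hgdef, sub_eq_add_neg, Function.comp] using this
    have hev : ∀ᶠ x in 𝓝[>] (0:ℝ), g x < g r₁ := hgbot.eventually (eventually_lt_atBot (g r₁))
    have hev2 : ∀ᶠ x in 𝓝[>] (0:ℝ), x ∈ Set.Ioc (0:ℝ) r₁ := by
      filter_upwards [self_mem_nhdsWithin,
        eventually_nhdsWithin_of_eventually_nhds (eventually_lt_nhds hr₁pos)] with x hx hx'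
      exact ⟨hx, hx'.le⟩
    obtain ⟨x, hx1, hx2⟩ := (hev.and hev2).exists
    exact absurd (hconc x hx2) (not_le.mpr hx1)
  -- conclusion
  intro r hr0 hrρ
  have hr : r ∈ Set.Ioo (0:ℝ) ρ := ⟨hr0, hrρ⟩
  rw [(hq r hr).deriv]
  have := hWpos r hr
  have h2 := hpos₂ r hr0 hrρ
  positivity
end
end

section
/- Let N ≥ 2, α > 1−N and σ > 0 satisfy N − 1 + ασ/2 ≥ 0 (which holds under the condition −σα < 2·min{1, N−1+α}). Then for every continuously differentiable function u : (0,∞) → ℝ with compact support and every r > 0, one has r^{N−1+ασ/2}·u(r)² ≤ ∫_r^∞ s^{N−1}(u'(s)² + s^{ασ}u(s)²) ds. In particular, |u(r)| ≤ r^{(1−N)/2 − ασ/4}·(∫_0^∞ s^{N−1}(u'(s)² + s^{ασ}u(s)²) ds)^{1/2} for all r > 0. -/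
open Real Filter Set MeasureTheory

noncomputable section

/-- a generalized radial lemma of Strauss type. Let `N ≥ 2`, `α > 1-N`,
`σ > 0` with `N - 1 + ασ/2 ≥ 0`. For every `C¹` function `u` on `(0,∞)` with compact
support in `(0,∞)` and every `r > 0`,
`r^{N-1+ασ/2} u(r)² ≤ ∫_r^∞ s^{N-1}(u'(s)² + s^{ασ}u(s)²) ds`, and in particular
`|u(r)| ≤ r^{(1-N)/2 - ασ/4} (∫_0^∞ s^{N-1}(u'(s)² + s^{ασ}u(s)²) ds)^{1/2}`. -/
theorem radial_lemma_weighted (N : ℕ) (hN : 2 ≤ N) (α σ : ℝ)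
    (hα : 1 - (N : ℝ) < α) (hσ : 0 < σ) (hexp : 0 ≤ (N : ℝ) - 1 + α * σ / 2)
    (u : ℝ → ℝ)
    (hu : ContDiffOn ℝ 1 u (Set.Ioi 0))
    (hsupp : HasCompactSupport u) (hsupp' : tsupport u ⊆ Set.Ioi 0) :
    ∀ r : ℝ, 0 < r →
      r ^ ((N : ℝ) - 1 + α * σ / 2) * u r ^ 2 ≤
        (∫ s in Set.Ioi r, s ^ (N - 1) * (deriv u s ^ 2 + s ^ (α * σ) * u s ^ 2)) ∧
      |u r| ≤ r ^ ((1 - (N : ℝ)) / 2 - α * σ / 4) *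
        Real.sqrt (∫ s in Set.Ioi (0 : ℝ),
          s ^ (N - 1) * (deriv u s ^ 2 + s ^ (α * σ) * u s ^ 2)) := by
  set β : ℝ := (N : ℝ) - 1 + α * σ / 2 with hβdef
  have hβ : 0 ≤ β := hexp
  set f : ℝ → ℝ := fun s => s ^ (N - 1) * (deriv u s ^ 2 + s ^ (α * σ) * u s ^ 2)
    with hfdef
  -- support bounds
  obtain ⟨a, b, ha, hab⟩ : ∃ a b : ℝ, 0 < a ∧ tsupport u ⊆ Icc a b := by
    set K := insert (1 : ℝ) (tsupport u) with hKdef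
    have hKc : IsCompact K := hsupp.insert 1
    have hKsub : K ⊆ Ioi 0 := by
      rw [hKdef, insert_subset_iff]
      exact ⟨by norm_num, hsupp'⟩
    have hKne : K.Nonempty := ⟨1, mem_insert _ _⟩
    refine ⟨sInf K, sSup K, hKsub (hKc.sInf_mem hKne), fun x hx => ?_⟩
    exact ⟨csInf_le hKc.bddBelow (subset_insert _ _ hx),
      le_csSup hKc.bddAbove (subset_insert _ _ hx)⟩
  have hu0 : ∀ x, x ∉ Icc a b → u x = 0 := fun x hx =>
    image_eq_zero_of_notMem_tsupport (fun h => hx (hab h))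
  have hd0 : ∀ x, x ∉ Icc a b → deriv u x = 0 := by
    intro x hx
    by_contra h
    exact hx (hab (support_deriv_subset (Function.mem_support.mpr h)))
  have hf0 : ∀ x, x ∉ Icc a b → f x = 0 := by
    intro x hx
    simp [hfdef, hu0 x hx, hd0 x hx]
  -- continuity
  have hcu : ContinuousOn u (Ioi 0) := hu.continuousOn
  have hcd : ContinuousOn (deriv u) (Ioi 0) :=
    hu.continuousOn_deriv_of_isOpen isOpen_Ioi le_rfl
  have hrpow : ∀ p : ℝ, ContinuousOn (fun s : ℝ => s ^ p) (Ioi 0) := fun p =>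
    ContinuousOn.rpow_const continuousOn_id (fun x hx => Or.inl (ne_of_gt hx))
  have hcf : ContinuousOn f (Ioi 0) := by
    exact (Continuous.continuousOn (continuous_pow _)).mul
      ((hcd.pow 2).add ((hrpow (α * σ)).mul (hcu.pow 2)))
  have hnonneg : ∀ s ∈ Ioi (0 : ℝ), 0 ≤ f s := by
    intro s hs
    have hs0 : (0 : ℝ) < s := hs
    rw [hfdef]
    positivity
  -- integrability on (0, ∞)
  have hfint : IntegrableOn f (Ioi 0) := by
    have hsub : Icc (a / 2) b ⊆ Ioi (0 : ℝ) := fun x hx =>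
      lt_of_lt_of_le (by linarith) hx.1
    have h1 : IntegrableOn f (Icc (a / 2) b) :=
      (hcf.mono hsub).integrableOn_compact isCompact_Icc
    have h2 : IntegrableOn f (Ioi 0 \ Icc (a / 2) b) := by
      have heq : EqOn f (fun _ => (0 : ℝ)) (Ioi 0 \ Icc (a / 2) b) := by
        intro x hx
        apply hf0
        intro hmem
        exact hx.2 ⟨by linarith [hmem.1], hmem.2⟩
      exact (integrableOn_congr_fun heq
        (measurableSet_Ioi.diff measurableSet_Icc)).mpr (integrableOn_zero)
    exact (h1.union h2).mono_set (fun x hx => by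
      by_cases h : x ∈ Icc (a / 2) b
      · exact Or.inl h
      · exact Or.inr ⟨hx, h⟩)
  -- main work
  intro r hr
  set c : ℝ := max r b + 1 with hcdef
  have hrc : r ≤ c := le_trans (le_max_left r b) (by linarith)
  have hbc : b < c := lt_of_le_of_lt (le_max_right r b) (by linarith)
  have hc0 : (0 : ℝ) < c := lt_of_lt_of_le hr hrc
  have huc : u c = 0 := hu0 c (fun h => absurd h.2 (not_le.mpr hbc))
  have hIccsub : Icc r c ⊆ Ioi (0 : ℝ) := fun x hx => lt_of_lt_of_le hr hx.1
  set G' : ℝ → ℝ := fun s =>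
    β * s ^ (β - 1) * u s ^ 2 + s ^ β * (2 * u s * deriv u s) with hG'def
  have hderiv : ∀ s ∈ Icc r c, HasDerivAt (fun x => x ^ β * u x ^ 2) (G' s) s := by
    intro s hs
    have hs0 : (0 : ℝ) < s := hIccsub hs
    have h1 : HasDerivAt (fun x : ℝ => x ^ β) (β * s ^ (β - 1)) s :=
      Real.hasDerivAt_rpow_const (Or.inl hs0.ne')
    have h2 : HasDerivAt u (deriv u s) s :=
      ((hu.differentiableOn one_ne_zero).differentiableAt (Ioi_mem_nhds hs0)).hasDerivAt
    have h3 : HasDerivAt (fun x => u x ^ 2) (2 * u s * deriv u s) s := by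
      have h := h2.pow 2
      norm_num at h
      exact h
    exact h1.mul h3
  have hcG'0 : ContinuousOn G' (Ioi 0) :=
    ((continuousOn_const.mul (hrpow (β - 1))).mul (hcu.pow 2)).add
      ((hrpow β).mul ((continuousOn_const.mul hcu).mul hcd))
  have hG'int : IntervalIntegrable G' volume r c :=
    (hcG'0.mono hIccsub).intervalIntegrable_of_Icc hrc
  have hfintc : IntervalIntegrable f volume r c :=
    (hcf.mono hIccsub).intervalIntegrable_of_Icc hrc
  have hFTC : ∫ s in r..c, G' s = c ^ β * u c ^ 2 - r ^ β * u r ^ 2 :=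
    intervalIntegral.integral_eq_sub_of_hasDerivAt
      (fun s hs => hderiv s (by rwa [uIcc_of_le hrc] at hs)) hG'int
  -- pointwise bound
  have hptw : ∀ s ∈ Icc r c, -G' s ≤ f s := by
    intro s hs
    have hs0 : (0 : ℝ) < s := hIccsub hs
    have hnp : (s : ℝ) ^ (N - 1) = s ^ ((N : ℝ) - 1) := by
      rw [← Real.rpow_natCast s (N - 1), Nat.cast_sub (by omega), Nat.cast_one]
    set A : ℝ := s ^ (((N : ℝ) - 1) / 2) * |deriv u s| with hA
    set B : ℝ := s ^ (((N : ℝ) - 1) / 2 + α * σ / 2) * |u s| with hB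
    have hAB := two_mul_le_add_sq A B
    have hA2 : A ^ 2 = s ^ ((N : ℝ) - 1) * deriv u s ^ 2 := by
      rw [hA, mul_pow, sq_abs, ← Real.rpow_natCast (s ^ (((N : ℝ) - 1) / 2)) 2,
        ← Real.rpow_mul hs0.le]
      norm_num
    have hB2 : B ^ 2 = s ^ ((N : ℝ) - 1) * (s ^ (α * σ) * u s ^ 2) := by
      rw [hB, mul_pow, sq_abs, ← Real.rpow_natCast (s ^ (((N : ℝ) - 1) / 2 + α * σ / 2)) 2,
        ← Real.rpow_mul hs0.le,
        show ((((N : ℝ) - 1) / 2 + α * σ / 2) * ((2 : ℕ) : ℝ)) = ((N : ℝ) - 1) + α * σ from by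
          push_cast; ring,
        Real.rpow_add hs0, mul_assoc]
    have hABval : A * B = s ^ β * (|u s| * |deriv u s|) := by
      rw [hA, hB,
        show s ^ (((N : ℝ) - 1) / 2) * |deriv u s| *
            (s ^ (((N : ℝ) - 1) / 2 + α * σ / 2) * |u s|) =
          s ^ (((N : ℝ) - 1) / 2) * s ^ (((N : ℝ) - 1) / 2 + α * σ / 2) *
            (|u s| * |deriv u s|) from by ring,
        ← Real.rpow_add hs0,
        show ((N : ℝ) - 1) / 2 + (((N : ℝ) - 1) / 2 + α * σ / 2) = β from by
          rw [hβdef]; ring]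
    have h1 : 0 ≤ β * s ^ (β - 1) * u s ^ 2 := by positivity
    have h2 : -(s ^ β * (2 * u s * deriv u s)) ≤ 2 * (A * B) := by
      rw [hABval]
      have habs : -(u s * deriv u s) ≤ |u s| * |deriv u s| := by
        rw [← abs_mul]; exact neg_le_abs _
      nlinarith [Real.rpow_nonneg hs0.le β]
    have hfeq : f s = A ^ 2 + B ^ 2 := by
      rw [hfdef]
      simp only
      rw [hnp, hA2, hB2]
      ring
    rw [hfeq, hG'def]
    simp only
    linarith
  -- assemble first conclusion
  have hgr : r ^ β * u r ^ 2 = ∫ s in r..c, -G' s := by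
    rw [intervalIntegral.integral_neg, hFTC, huc]
    ring
  have hstep1 : (∫ s in r..c, -G' s) ≤ ∫ s in r..c, f s :=
    intervalIntegral.integral_mono_on hrc hG'int.neg hfintc hptw
  have hae : 0 ≤ᵐ[volume.restrict (Ioi (0:ℝ))] f := by
    filter_upwards [ae_restrict_mem measurableSet_Ioi] with x hx using hnonneg x hx
  have haer : 0 ≤ᵐ[volume.restrict (Ioi r)] f := by
    filter_upwards [ae_restrict_mem measurableSet_Ioi] with x hx using
      hnonneg x (lt_trans hr hx)
  have hfintr : IntegrableOn f (Ioi r) := hfint.mono_set (Ioi_subset_Ioi hr.le)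
  have hstep2 : (∫ s in r..c, f s) ≤ ∫ s in Ioi r, f s := by
    rw [intervalIntegral.integral_of_le hrc]
    exact setIntegral_mono_set hfintr haer
      (HasSubset.Subset.eventuallyLE Ioc_subset_Ioi_self)
  have main1 : r ^ β * u r ^ 2 ≤ ∫ s in Ioi r, f s := by
    rw [hgr]; exact le_trans hstep1 hstep2
  refine ⟨main1, ?_⟩
  -- second conclusion
  have hI : (∫ s in Ioi r, f s) ≤ ∫ s in Ioi 0, f s :=
    setIntegral_mono_set hfint hae
      (HasSubset.Subset.eventuallyLE (Ioi_subset_Ioi hr.le))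
  have hI0 : 0 ≤ ∫ s in Ioi (0:ℝ), f s := setIntegral_nonneg measurableSet_Ioi hnonneg
  have hrβ : (0 : ℝ) < r ^ β := Real.rpow_pos_of_pos hr β
  have hu2 : u r ^ 2 ≤ (r ^ β)⁻¹ * ∫ s in Ioi (0:ℝ), f s :=
    (le_inv_mul_iff₀ hrβ).mpr (le_trans main1 hI)
  calc |u r| = Real.sqrt (u r ^ 2) := (Real.sqrt_sq_eq_abs _).symm
    _ ≤ Real.sqrt ((r ^ β)⁻¹ * ∫ s in Ioi (0:ℝ), f s) := Real.sqrt_le_sqrt hu2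
    _ = Real.sqrt ((r ^ β)⁻¹) * Real.sqrt (∫ s in Ioi (0:ℝ), f s) :=
        Real.sqrt_mul (by positivity) _
    _ = r ^ ((1 - (N : ℝ)) / 2 - α * σ / 4) * Real.sqrt (∫ s in Ioi (0:ℝ), f s) := by
        congr 1
        rw [← Real.rpow_neg hr.le,
          show -β = ((1 - (N : ℝ)) / 2 - α * σ / 4) * 2 from by rw [hβdef]; ring,
          Real.rpow_mul hr.le, Real.rpow_two, Real.sqrt_sq (by positivity)]
end
end

section
/- Let N ≥ 2, α > 1−N and σ ∈ (0, 2/(N−2)⁺) satisfy −σα < 2·min{1, N−1+α}. Suppose u ∈ C([0,∞)) ∩ C²((0,∞)) is nonnegative, satisfies u'' + ((N−1)/r)u' − r^{ασ}u + u^{2σ+1} = 0 on (0,∞), and limsup_{r→∞} r^{(N−1)/2 + ασ/4}·u(r) < ∞. Then there exist constants C > 0 and c > 0 such that u(r) ≤ C·exp(−c·r^{(ασ+2)/2}) for all r ≥ 0. -/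
open Real Filter Set MeasureTheory Topology

noncomputable section

private lemma psi_deriv (c β : ℝ) {r : ℝ} (hr : 0 < r) :
    HasDerivAt (fun x : ℝ => Real.exp (-c * x ^ β))
      ((-(c * β) * r ^ (β - 1)) * Real.exp (-c * r ^ β)) r := by
  have h1 : HasDerivAt (fun x : ℝ => x ^ β) (β * r ^ (β - 1)) r :=
    Real.hasDerivAt_rpow_const (Or.inl hr.ne')
  have h2 := (h1.const_mul (-c)).exp
  convert h2 using 1
  ring

private lemma psi_deriv2 (c β : ℝ) {r : ℝ} (hr : 0 < r) :
    HasDerivAt (fun x : ℝ => (-(c * β) * x ^ (β - 1)) * Real.exp (-c * x ^ β))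
      ((-(c * β) * ((β - 1) * r ^ (β - 1 - 1))) * Real.exp (-c * r ^ β)
        + (-(c * β) * r ^ (β - 1)) * ((-(c * β) * r ^ (β - 1)) * Real.exp (-c * r ^ β))) r := by
  have h1 : HasDerivAt (fun x : ℝ => -(c * β) * x ^ (β - 1))
      (-(c * β) * ((β - 1) * r ^ (β - 1 - 1))) r :=
    (Real.hasDerivAt_rpow_const (Or.inl hr.ne')).const_mul _
  exact h1.mul (psi_deriv c β hr)

/-- Let `N ≥ 2`, `α > 1-N`, `σ ∈ (0, 2/(N-2)⁺)` (expressed as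
`σ(N-2) < 2`, which is no restriction if `N = 2`) with `-σα < 2 min{1, N-1+α}`.
If `u ∈ C([0,∞)) ∩ C²((0,∞))` is nonnegative, solves the radial equation
`u'' + ((N-1)/r)u' - r^{ασ}u + u^{2σ+1} = 0` on `(0,∞)` and satisfies
`limsup_{r→∞} r^{(N-1)/2+ασ/4} u(r) < ∞`, then `u(r) ≤ C exp(-c r^{(ασ+2)/2})`. -/
theorem power_equation_decay (N : ℕ) (hN : 2 ≤ N) (α σ : ℝ)
    (hα : 1 - (N : ℝ) < α) (hσ : 0 < σ) (hσ' : σ * ((N : ℝ) - 2) < 2)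
    (hcond : -(σ * α) < 2 * min 1 ((N : ℝ) - 1 + α))
    (u : ℝ → ℝ)
    (huc : ContinuousOn u (Set.Ici 0)) (huC2 : ContDiffOn ℝ 2 u (Set.Ioi 0))
    (hnonneg : ∀ r : ℝ, 0 ≤ r → 0 ≤ u r)
    (hode : ∀ r : ℝ, 0 < r →
      deriv (deriv u) r + ((N : ℝ) - 1) / r * deriv u r
        - r ^ (α * σ) * u r + u r ^ (2 * σ + 1) = 0)
    (hbd : ∃ M : ℝ, ∀ᶠ r : ℝ in Filter.atTop,
      r ^ (((N : ℝ) - 1) / 2 + α * σ / 4) * u r ≤ M) :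
    ∃ C : ℝ, 0 < C ∧ ∃ c : ℝ, 0 < c ∧
      ∀ r : ℝ, 0 ≤ r → u r ≤ C * Real.exp (-c * r ^ ((α * σ + 2) / 2)) := by
  obtain ⟨M₀, hM₀⟩ := hbd
  have hN2 : (2 : ℝ) ≤ (N : ℝ) := by exact_mod_cast hN
  have ha2 : -2 < α * σ := by linarith [min_le_left (1:ℝ) ((N : ℝ) - 1 + α)]
  have hmin2 : -(σ * α) < 2 * ((N : ℝ) - 1 + α) := by
    linarith [min_le_right (1:ℝ) ((N : ℝ) - 1 + α)]
  set a := α * σ with ha_def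
  clear_value a
  set β := (a + 2) / 2 with hβ_def
  clear_value β
  have hβ : 0 < β := by rw [hβ_def]; linarith
  have hβne : β ≠ 0 := ne_of_gt hβ
  set c := 1 / (2 * β) with hc_def
  clear_value c
  have hc : 0 < c := by rw [hc_def]; positivity
  have hcβ : c * β = 1 / 2 := by rw [hc_def]; field_simp
  set γ := ((N : ℝ) - 1) / 2 + a / 4 with hγ_def
  clear_value γ
  have hγ : 0 < γ := by rw [hγ_def]; linarith
  set ε := a + 2 * σ * γ with hε_def
  clear_value ε
  have hε : 0 < ε := by
    have he : ε = σ * ((((N : ℝ) - 1 + α)) + α * σ / 2) := by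
      rw [hε_def, hγ_def, ha_def]; ring
    rw [he]
    apply mul_pos hσ
    linarith
  set M := max M₀ 1 with hM_def
  have hM1 : (1 : ℝ) ≤ M := le_max_right _ _
  have hM0le : M₀ ≤ M := le_max_left _ _
  have hM : (0 : ℝ) < M := lt_of_lt_of_le one_pos hM1
  clear_value M
  -- eventual bound on u
  have hub : ∀ᶠ r in atTop, u r ≤ M * r ^ (-γ) := by
    filter_upwards [hM₀, eventually_ge_atTop 1] with r h1 h2
    have hr : 0 < r := lt_of_lt_of_le one_pos h2
    have hrγ : 0 < r ^ γ := Real.rpow_pos_of_pos hr γ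
    have h3 : u r * r ^ γ ≤ M := by
      rw [mul_comm]; exact h1.trans hM0le
    have h4 : u r ≤ M / r ^ γ := (le_div_iff₀ hrγ).2 h3
    rwa [Real.rpow_neg hr.le, ← div_eq_mul_inv]
  -- u tends to 0
  have hu0 : Tendsto u atTop (𝓝 0) := by
    have hup : Tendsto (fun r : ℝ => M * r ^ (-γ)) atTop (𝓝 0) := by
      have := (tendsto_rpow_neg_atTop hγ).const_mul M
      simpa using this
    apply tendsto_of_tendsto_of_tendsto_of_le_of_le' tendsto_const_nhds hup
    · filter_upwards [eventually_ge_atTop (0:ℝ)] with r hr using hnonneg r hr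
    · exact hub
  have hsm : ∀ᶠ r : ℝ in atTop, 2 * M ^ (2 * σ) ≤ r ^ ε :=
    (tendsto_rpow_atTop hε).eventually_ge_atTop _
  obtain ⟨R₀, hR₀⟩ := eventually_atTop.1 (hub.and hsm)
  set R := max R₀ 1 with hR_def
  have hR1 : (1 : ℝ) ≤ R := le_max_right _ _
  have hRfacts : ∀ r : ℝ, R ≤ r → u r ≤ M * r ^ (-γ) ∧ 2 * M ^ (2 * σ) ≤ r ^ ε :=
    fun r hr => hR₀ r (le_trans (le_max_left _ _) hr)
  clear_value R
  have hRpos : (0 : ℝ) < R := lt_of_lt_of_le one_pos hR1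
  set C₁ := (u R + 1) * Real.exp (c * R ^ β) with hC₁_def
  have huR : 0 ≤ u R := hnonneg R hRpos.le
  have hC₁pos : 0 < C₁ := mul_pos (by linarith) (Real.exp_pos _)
  have hφR' : C₁ * Real.exp (-c * R ^ β) = u R + 1 := by
    have h0 : c * R ^ β + -c * R ^ β = 0 := by ring
    rw [hC₁_def, mul_assoc, ← Real.exp_add, h0, Real.exp_zero, mul_one]
  clear_value C₁
  set φ := fun r : ℝ => C₁ * Real.exp (-c * r ^ β) with hφ_def
  have hφpos : ∀ r, 0 < φ r := fun r => mul_pos hC₁pos (Real.exp_pos _)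
  have hφR : φ R = u R + 1 := hφR'
  have hψcont : ContinuousOn (fun r : ℝ => Real.exp (-c * r ^ β)) (Ioi 0) := by
    apply Real.continuous_exp.comp_continuousOn
    apply ContinuousOn.mul continuousOn_const
    intro x hx
    exact (Real.continuousAt_rpow_const x β (Or.inl (ne_of_gt hx))).continuousWithinAt
  have hφcont : ContinuousOn φ (Ioi 0) := continuousOn_const.mul hψcont
  -- differentiability of u
  have huD : ∀ x ∈ Ioi (0:ℝ), HasDerivAt u (deriv u x) x := fun x hx =>
    ((huC2.differentiableOn (by norm_num)).differentiableAt
      (isOpen_Ioi.mem_nhds hx)).hasDerivAt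
  -- key comparison claim
  have key : ∀ r, R ≤ r → u r ≤ φ r := by
    by_contra hcon
    push_neg at hcon
    obtain ⟨r₁, hr₁R, hr₁⟩ := hcon
    set v := fun r : ℝ => u r - φ r with hv_def
    have hv1 : 0 < v r₁ := by simp only [hv_def]; linarith
    have hφ0 : Tendsto φ atTop (𝓝 0) := by
      have h1 : Tendsto (fun r : ℝ => -c * r ^ β) atTop atBot :=
        (tendsto_const_mul_atBot_of_neg (by linarith : -c < 0)).2 (tendsto_rpow_atTop hβ)
      have h2 := Real.tendsto_exp_atBot.comp h1
      have h3 := h2.const_mul C₁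
      rw [mul_zero] at h3
      rw [hφ_def]
      simpa [Function.comp] using h3
    have hv0 : Tendsto v atTop (𝓝 0) := by
      rw [hv_def]
      have := hu0.sub hφ0
      simpa using this
    obtain ⟨T, hT⟩ := eventually_atTop.1 (hv0.eventually_lt_const hv1)
    set b := max T (r₁ + 1) with hb_def
    have hTb : T ≤ b := le_max_left _ _
    have hr₁b : r₁ ≤ b := le_trans (by linarith) (le_max_right _ _)
    have hRb : R < b := lt_of_le_of_lt hr₁R (lt_of_lt_of_le (by linarith) (le_max_right _ _))
    clear_value b
    have hvc : ContinuousOn v (Icc R b) := by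
      rw [hv_def]
      apply ContinuousOn.sub
      · exact huc.mono (fun x hx => le_trans hRpos.le hx.1)
      · exact hφcont.mono (fun x hx => lt_of_lt_of_le hRpos hx.1)
    obtain ⟨r₀, hr₀mem, hmax⟩ := isCompact_Icc.exists_isMaxOn
      ⟨R, left_mem_Icc.2 hRb.le⟩ hvc
    have hmax' : ∀ x ∈ Icc R b, v x ≤ v r₀ := isMaxOn_iff.1 hmax
    have hvr₀ : v r₁ ≤ v r₀ := hmax' r₁ ⟨hr₁R, hr₁b⟩
    have hvR : v R = -1 := by simp only [hv_def]; rw [hφR]; ring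
    have hr₀R : R < r₀ := by
      rcases eq_or_lt_of_le hr₀mem.1 with h | h
      · exfalso; rw [← h, hvR] at hvr₀; linarith
      · exact h
    have hr₀b : r₀ < b := by
      rcases eq_or_lt_of_le hr₀mem.2 with h | h
      · exfalso
        have := hT b hTb
        rw [← h] at this
        linarith
      · exact h
    have hr₀pos : 0 < r₀ := lt_trans hRpos hr₀R
    set E := Real.exp (-c * r₀ ^ β) with hE_def
    have hEpos : 0 < E := Real.exp_pos _
    set ψ1 := fun x : ℝ => (-(c * β) * x ^ (β - 1)) * Real.exp (-c * x ^ β) with hψ1_def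
    set ψ2 := fun x : ℝ => (-(c * β) * ((β - 1) * x ^ (β - 1 - 1))) * Real.exp (-c * x ^ β)
          + (-(c * β) * x ^ (β - 1)) * ((-(c * β) * x ^ (β - 1)) * Real.exp (-c * x ^ β))
          with hψ2_def
    -- derivative of v on Ioi 0
    have hvderiv : ∀ x ∈ Ioi (0:ℝ), HasDerivAt v (deriv u x - C₁ * ψ1 x) x := by
      intro x hx
      simp only [hv_def, hφ_def, hψ1_def]
      exact (huD x hx).sub ((psi_deriv c β hx).const_mul C₁)
    have hdveq : ∀ x ∈ Ioi (0:ℝ), deriv v x = deriv u x - C₁ * ψ1 x :=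
      fun x hx => (hvderiv x hx).deriv
    have hloc : IsLocalMax v r₀ := hmax.isLocalMax (Icc_mem_nhds hr₀R hr₀b)
    have hdv0 : deriv v r₀ = 0 := hloc.deriv_eq_zero
    have hdu_r₀ : deriv u r₀ = C₁ * ψ1 r₀ := by
      have := hdveq r₀ hr₀pos
      rw [hdv0] at this
      linarith
    -- second derivative of v at r₀
    have h1u : ContDiffOn ℝ 1 (deriv u) (Ioi 0) :=
      huC2.deriv_of_isOpen isOpen_Ioi (by norm_num)
    have hdu2 : HasDerivAt (deriv u) (deriv (deriv u) r₀) r₀ :=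
      ((h1u.differentiableOn one_ne_zero).differentiableAt
        (isOpen_Ioi.mem_nhds hr₀pos)).hasDerivAt
    set L := deriv (deriv u) r₀ - C₁ * ψ2 r₀ with hL_def
    have hg : HasDerivAt (fun x => deriv u x - C₁ * ψ1 x) L r₀ := by
      rw [hL_def]
      simp only [hψ1_def, hψ2_def]
      exact hdu2.sub ((psi_deriv2 c β hr₀pos).const_mul C₁)
    clear_value L
    have hLd : HasDerivAt (deriv v) L r₀ := by
      apply hg.congr_of_eventuallyEq
      filter_upwards [isOpen_Ioi.mem_nhds hr₀pos] with x hx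
      exact hdveq x hx
    -- supersolution estimate
    have hApos : 0 < r₀ ^ a := Real.rpow_pos_of_pos hr₀pos a
    have hr2 : r₀ ^ (β - 1) * r₀ ^ (β - 1) = r₀ ^ a := by
      rw [← Real.rpow_add hr₀pos]; congr 1; rw [hβ_def]; ring
    have hr3 : r₀ ^ (β - 1 - 1) = r₀ ^ (β - 1) / r₀ := by
      rw [Real.rpow_sub hr₀pos, Real.rpow_one]
    have hr4 : 0 < r₀ ^ (β - 1 - 1) := Real.rpow_pos_of_pos hr₀pos _
    have hsuper : ψ2 r₀ + ((N : ℝ) - 1) / r₀ * ψ1 r₀ ≤ 1 / 2 * (r₀ ^ a * E) := by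
      have hne : r₀ ≠ 0 := ne_of_gt hr₀pos
      have hr3' : r₀ ^ (β - 1) = r₀ * r₀ ^ (β - 1 - 1) := by
        rw [hr3]; field_simp
      have e1 : ((N : ℝ) - 1) / r₀ * ψ1 r₀
          = -(((N : ℝ) - 1) * (c * β) * r₀ ^ (β - 1 - 1)) * E := by
        simp only [hψ1_def, ← hE_def]
        rw [hr3', div_mul_eq_mul_div, div_eq_iff hne]
        ring
      have e2 : ψ2 r₀ = (1 / 4 * r₀ ^ a - 1 / 2 * (β - 1) * r₀ ^ (β - 1 - 1)) * E := by
        simp only [hψ2_def, ← hE_def]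
        rw [show (-(c * β) * r₀ ^ (β - 1)) * ((-(c * β) * r₀ ^ (β - 1)) * E)
            = (c * β) * (c * β) * (r₀ ^ (β - 1) * r₀ ^ (β - 1)) * E by ring,
          hr2, hcβ]
        ring
      rw [e1, e2, hcβ]
      have hβN : 0 ≤ (β - 1) + ((N : ℝ) - 1) := by linarith
      linarith [mul_pos hApos hEpos, mul_nonneg (mul_nonneg hβN hr4.le) hEpos.le]
    -- pointwise bounds at r₀
    have hvr₀pos : 0 < v r₀ := lt_of_lt_of_le hv1 hvr₀
    have hφval : φ r₀ = C₁ * E := by rw [hφ_def]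
    have hvφ : 0 < u r₀ - C₁ * E := by
      have h := hvr₀pos
      simp only [hv_def, hφval] at h
      exact h
    have hu_r₀pos : 0 < u r₀ := by
      linarith [hvφ, mul_pos hC₁pos hEpos]
    have husm : u r₀ ^ (2 * σ) ≤ 1 / 2 * r₀ ^ a := by
      obtain ⟨hub', hsm'⟩ := hRfacts r₀ hr₀R.le
      have h2σ : (0 : ℝ) ≤ 2 * σ := by linarith
      have h1 : u r₀ ^ (2 * σ) ≤ (M * r₀ ^ (-γ)) ^ (2 * σ) :=
        Real.rpow_le_rpow (hnonneg r₀ hr₀pos.le) hub' h2σ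
      have h2 : (M * r₀ ^ (-γ)) ^ (2 * σ) = M ^ (2 * σ) * r₀ ^ (-γ * (2 * σ)) := by
        rw [Real.mul_rpow hM.le (Real.rpow_nonneg hr₀pos.le _), ← Real.rpow_mul hr₀pos.le]
      have h3 : r₀ ^ a = r₀ ^ ε * r₀ ^ (-γ * (2 * σ)) := by
        rw [← Real.rpow_add hr₀pos]; congr 1; rw [hε_def]; ring
      have h4 : 0 < r₀ ^ (-γ * (2 * σ)) := Real.rpow_pos_of_pos hr₀pos _
      rw [h3]
      have h5 : M ^ (2 * σ) * r₀ ^ (-γ * (2 * σ)) ≤ 1 / 2 * (r₀ ^ ε * r₀ ^ (-γ * (2 * σ))) := by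
        linarith [mul_nonneg (sub_nonneg.2 hsm') h4.le]
      linarith [h1.trans_eq h2]
    have hpow : u r₀ ^ (2 * σ + 1) = u r₀ ^ (2 * σ) * u r₀ := by
      rw [Real.rpow_add hu_r₀pos, Real.rpow_one]
    have hu2 : u r₀ ^ (2 * σ + 1) ≤ 1 / 2 * r₀ ^ a * u r₀ := by
      rw [hpow]
      have := mul_le_mul_of_nonneg_right husm hu_r₀pos.le
      linarith
    -- L > 0
    have hL : 0 < L := by
      have hODE := hode r₀ hr₀pos
      have hdd : deriv (deriv u) r₀
          = -(((N : ℝ) - 1) / r₀) * (C₁ * ψ1 r₀) + r₀ ^ a * u r₀ - u r₀ ^ (2 * σ + 1) := by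
        rw [← hdu_r₀]; linarith
      have hsup' : C₁ * (ψ2 r₀ + ((N : ℝ) - 1) / r₀ * ψ1 r₀) ≤ C₁ * (1 / 2 * (r₀ ^ a * E)) :=
        mul_le_mul_of_nonneg_left hsuper hC₁pos.le
      rw [hL_def, hdd]
      linarith [hsup', hu2, mul_pos hApos hvφ]
    -- derive contradiction: v increases to the right of r₀
    have hslope := hasDerivAt_iff_tendsto_slope.1 hLd
    have hpos : ∀ᶠ y in 𝓝[>] r₀, 0 < deriv v y := by
      have h1 : ∀ᶠ y in 𝓝[≠] r₀, 0 < slope (deriv v) r₀ y :=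
        hslope.eventually_const_lt hL
      have h2 : ∀ᶠ y in 𝓝[>] r₀, 0 < slope (deriv v) r₀ y :=
        h1.filter_mono (nhdsWithin_mono r₀ (fun y hy => ne_of_gt hy))
      filter_upwards [h2, self_mem_nhdsWithin] with y hy hy'
      have hy'' : 0 < y - r₀ := sub_pos.2 hy'
      rw [slope_def_field, hdv0, sub_zero] at hy
      rcases div_pos_iff.1 hy with ⟨h, _⟩ | ⟨_, h⟩
      · exact h
      · linarith
    obtain ⟨m, hm, hIoo⟩ := mem_nhdsGT_iff_exists_Ioo_subset.1 hpos
    set t := min m b with ht_def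
    have hr₀t : r₀ < t := lt_min hm hr₀b
    set p := (r₀ + t) / 2 with hp_def
    have hp1 : r₀ < p := by rw [hp_def]; linarith
    have hp2 : p < t := by rw [hp_def]; linarith
    have hmono : StrictMonoOn v (Icc r₀ p) := by
      apply strictMonoOn_of_deriv_pos (convex_Icc _ _)
      · exact hvc.mono (fun x hx => ⟨le_trans hr₀R.le hx.1,
          le_trans hx.2 (le_trans hp2.le (min_le_right _ _))⟩)
      · intro x hx
        rw [interior_Icc] at hx
        exact hIoo ⟨hx.1, lt_of_lt_of_le (lt_trans hx.2 hp2) (min_le_left _ _)⟩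
    have hvp : v r₀ < v p :=
      hmono (left_mem_Icc.2 hp1.le) (right_mem_Icc.2 hp1.le) hp1
    have hpmem : p ∈ Icc R b :=
      ⟨le_trans hr₀R.le hp1.le, le_trans hp2.le (min_le_right _ _)⟩
    exact absurd (hmax' p hpmem) (not_le.2 hvp)
  -- assemble the final constants
  obtain ⟨x₀, hx₀mem, hx₀⟩ := isCompact_Icc.exists_isMaxOn
    (⟨0, left_mem_Icc.2 hRpos.le⟩ : (Icc (0:ℝ) R).Nonempty)
    (huc.mono (fun x hx => hx.1))
  have hx₀' : ∀ x ∈ Icc (0:ℝ) R, u x ≤ u x₀ := isMaxOn_iff.1 hx₀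
  have hx₀nn : 0 ≤ u x₀ := hnonneg x₀ hx₀mem.1
  refine ⟨(u x₀ + 1) * Real.exp (c * R ^ β) + C₁, ?_, c, hc, ?_⟩
  · have h0 : 0 < (u x₀ + 1) * Real.exp (c * R ^ β) :=
      mul_pos (by linarith) (Real.exp_pos _)
    linarith
  intro r hr
  rcases le_or_gt r R with h | h
  · have h1 : u r ≤ u x₀ := hx₀' r ⟨hr, h⟩
    have h2 : r ^ β ≤ R ^ β := Real.rpow_le_rpow hr h hβ.le
    have h3 : (1 : ℝ) ≤ Real.exp (c * R ^ β) * Real.exp (-c * r ^ β) := by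
      rw [← Real.exp_add, ← Real.exp_zero]
      apply Real.exp_le_exp.2
      linarith [mul_le_mul_of_nonneg_left h2 hc.le]
    have h4 : u x₀ ≤ (u x₀ + 1) * (Real.exp (c * R ^ β) * Real.exp (-c * r ^ β)) := by
      linarith [mul_le_mul_of_nonneg_left h3 (by linarith : (0:ℝ) ≤ u x₀ + 1)]
    have h5 : 0 < C₁ * Real.exp (-c * r ^ β) := mul_pos hC₁pos (Real.exp_pos _)
    linarith [h1, h4, h5]
  · have h1 := key r h.le
    simp only [hφ_def] at h1
    have h2 : 0 < (u x₀ + 1) * Real.exp (c * R ^ β) * Real.exp (-c * r ^ β) :=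
      mul_pos (mul_pos (by linarith) (Real.exp_pos _)) (Real.exp_pos _)
    linarith [h1, h2]
end
end
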